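/- arXiv:0906.1249 — 4 statements merged into one kernel-verified Lean document; each statement's English description precedes it below -/
import Mathlib

section
/- For positive reals α₁, …, αₙ with α₁ + ⋯ + αₙ = π and each αᵢ < π/2, the sum ∑ tan αᵢ is at least n·tan(π/n), with equality if and only if all αᵢ = π/n. -/
open Real Finset

lemma tan_strictConvexOn : StrictConvexOn ℝ (Set.Ioo 0 (π/2)) Real.tan := by
  apply strictConvexOn_of_deriv2_pos (convex_Ioo _ _)
  · intro x hx
    exact (Real.continuousAt_tan.2 (Real.cos_pos_of_mem_Ioo
      ⟨lt_trans (by linarith [Real.pi_pos]) hx.1, hx.2⟩).ne').continuousWithinAt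
  · intro x hx
    rw [interior_Ioo] at hx
    have hcos : 0 < Real.cos x := Real.cos_pos_of_mem_Ioo
      ⟨lt_trans (by linarith [Real.pi_pos]) hx.1, hx.2⟩
    have hsin : 0 < Real.sin x := Real.sin_pos_of_pos_of_lt_pi hx.1
      (lt_trans hx.2 (by linarith [Real.pi_pos]))
    have h1 : deriv (deriv Real.tan) x = 2 * Real.sin x / Real.cos x ^ 3 := by
      have heq : deriv Real.tan = fun y => 1 / Real.cos y ^ 2 := by
        funext y; exact Real.deriv_tan y
      rw [heq]
      have h2 : HasDerivAt (fun y => 1 / Real.cos y ^ 2)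
          (2 * Real.sin x / Real.cos x ^ 3) x := by
        have hc : HasDerivAt (fun y => Real.cos y ^ 2)
            (2 * Real.cos x ^ 1 * (-Real.sin x)) x := (Real.hasDerivAt_cos x).pow 2
        have := hc.inv (by positivity)
        simp only [one_div]
        refine this.congr_deriv ?_
        rw [div_eq_div_iff (pow_ne_zero _ (pow_ne_zero _ hcos.ne')) (pow_ne_zero _ hcos.ne')]
        ring
      exact h2.deriv
    simp only [Function.iterate_succ, Function.iterate_zero, Function.comp_apply, id]
    rw [h1]
    positivity

theorem sum_tan_ge_of_sum_eq_pi (n : ℕ) (hn : 0 < n) (α : Fin n → ℝ)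
    (hpos : ∀ i, 0 < α i) (hlt : ∀ i, α i < π / 2)
    (hsum : ∑ i, α i = π) :
    (n : ℝ) * Real.tan (π / n) ≤ ∑ i, Real.tan (α i) ∧
      (∑ i, Real.tan (α i) = (n : ℝ) * Real.tan (π / n) ↔ ∀ i, α i = π / n) := by
  have hpi := Real.pi_pos
  have hn3 : 3 ≤ n := by
    by_contra h
    push_neg at h
    interval_cases n
    · rw [Fin.sum_univ_one] at hsum
      have := hlt 0
      linarith
    · rw [Fin.sum_univ_two] at hsum
      have := hlt 0; have := hlt 1
      linarith
  have hnR : (0:ℝ) < n := Nat.cast_pos.mpr hn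
  have hw : ∀ i ∈ univ (α := Fin n), (0:ℝ) < 1 / n := fun _ _ => by positivity
  have hw1 : ∑ _i : Fin n, (1:ℝ) / n = 1 := by
    rw [Finset.sum_const, card_univ, Fintype.card_fin, nsmul_eq_mul]
    field_simp
  have hmem : ∀ i ∈ univ (α := Fin n), α i ∈ Set.Ioo 0 (π/2) :=
    fun i _ => ⟨hpos i, hlt i⟩
  have hcenter : ∑ i : Fin n, (1/(n:ℝ)) • α i = π / n := by
    simp only [smul_eq_mul, one_div, ← Finset.mul_sum, hsum]
    ring
  have key : Real.tan (∑ i : Fin n, (1/(n:ℝ)) • α i)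
      ≤ ∑ i : Fin n, (1/(n:ℝ)) • Real.tan (α i) :=
    tan_strictConvexOn.convexOn.map_sum_le (fun i hi => (hw i hi).le) hw1 hmem
  rw [hcenter] at key
  have hsmul : ∑ i : Fin n, (1/(n:ℝ)) • Real.tan (α i)
      = (1/(n:ℝ)) * ∑ i, Real.tan (α i) := by
    simp [Finset.mul_sum]
  constructor
  · rw [hsmul] at key
    calc (n:ℝ) * Real.tan (π/n) ≤ n * ((1/(n:ℝ)) * ∑ i, Real.tan (α i)) := by
          exact mul_le_mul_of_nonneg_left key hnR.le
      _ = ∑ i, Real.tan (α i) := by field_simp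
  · have heq := tan_strictConvexOn.map_sum_eq_iff hw hw1 hmem
    rw [hcenter] at heq
    constructor
    · intro h
      have : Real.tan (π/n) = ∑ i : Fin n, (1/(n:ℝ)) • Real.tan (α i) := by
        rw [hsmul, h]
        field_simp
      intro i
      exact heq.1 this i (mem_univ i)
    · intro h
      have : ∀ i : Fin n, Real.tan (α i) = Real.tan (π/n) := fun i => by rw [h i]
      rw [Finset.sum_congr rfl (fun i _ => this i), Finset.sum_const, card_univ,
        Fintype.card_fin, nsmul_eq_mul]
end

section
/- Let O be the center of a unit sphere, H a point at distance 1 from O, and consider the right triangle ABH in the plane through H perpendicular to OH, with HB ⊥ AB, ∠AHB = θ fixed (0 < θ < π/2), and BH = x > 0. Then the ratio η(x) of the solid-angle volume of the unit sphere cut out by the tetrahedron OABH to the volume of OABH (which equals x² tan θ / 6) is a strictly decreasing function of x, with η → 1 as x → 0⁺ and η → 0 as x → ∞. -/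
open Real MeasureTheory Metric Filter Set Pointwise

local notation "E3" => EuclideanSpace ℝ (Fin 3)

section Auxiliary

/-! ### Volume of the corner simplex -/

lemma vol_tri2 (s : ℝ) (hs : 0 ≤ s) :
    volume {q : ℝ × ℝ | 0 < q.1 ∧ 0 < q.2 ∧ q.1 + q.2 < s} = ENNReal.ofReal (s ^ 2 / 2) := by
  have hreg : {q : ℝ × ℝ | 0 < q.1 ∧ 0 < q.2 ∧ q.1 + q.2 < s}
      = regionBetween (fun _ => (0:ℝ)) (fun b => s - b) (Ioo 0 s) := by
    ext ⟨b, c⟩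
    simp only [regionBetween, mem_setOf_eq, mem_Ioo]
    constructor
    · rintro ⟨hb, hc, hbc⟩
      exact ⟨⟨hb, by linarith⟩, hc, by linarith⟩
    · rintro ⟨⟨hb, hbs⟩, hc, hcs⟩
      exact ⟨hb, hc, by linarith⟩
  have hg : IntegrableOn (fun b => s - b) (Ioo 0 s) volume :=
    ((continuous_const.sub continuous_id).integrableOn_Icc (a := 0) (b := s)).mono_set
      Ioo_subset_Icc_self
  have hvol : (volume : Measure (ℝ × ℝ)) = (volume : Measure ℝ).prod volume := rfl
  rw [hreg, hvol, volume_regionBetween_eq_integral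
      (integrableOn_const measure_Ioo_lt_top.ne) hg measurableSet_Ioo
      (fun x hx => by simp only [mem_Ioo] at hx; linarith [hx.2])]
  congr 1
  simp only [Pi.sub_apply, sub_zero]
  have : ∫ y in Ioo (0:ℝ) s, (s - y) = ∫ y in (0:ℝ)..s, (s - y) := by
    rw [intervalIntegral.integral_of_le hs, integral_Ioc_eq_integral_Ioo]
  rw [this, intervalIntegral.integral_sub intervalIntegrable_const
    intervalIntegral.intervalIntegrable_id, _root_.integral_id]
  simp only [intervalIntegral.integral_const, smul_eq_mul, sub_zero, mul_comm]
  ring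

noncomputable def F3 : (Fin 3 → ℝ) ≃ᵐ ℝ × (ℝ × ℝ) :=
  (MeasurableEquiv.piFinSuccAbove (fun _ => ℝ) 0).trans
    ((MeasurableEquiv.refl ℝ).prodCongr MeasurableEquiv.finTwoArrow)

lemma F3_mp : MeasurePreserving F3 volume volume :=
  ((MeasurePreserving.id _).prod (volume_preserving_finTwoArrow ℝ)).comp
    (volume_preserving_piFinSuccAbove (fun _ : Fin 3 => ℝ) 0)

set_option linter.unreachableTactic false in
set_option linter.unusedTactic false in
lemma F3_apply (y : Fin 3 → ℝ) : F3 y = (y 0, (y 1, y 2)) := by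
  simp [F3, MeasurableEquiv.piFinSuccAbove, MeasurableEquiv.finTwoArrow,
    MeasurableEquiv.piFinTwo, MeasurableEquiv.prodCongr, Fin.succAbove]
  constructor
  · rfl
  · constructor <;> rfl

lemma vol_K1 : volume {y : Fin 3 → ℝ | (∀ i, 0 < y i) ∧ y 0 + y 1 + y 2 < 1}
    = ENNReal.ofReal (1 / 6) := by
  have hK : {y : Fin 3 → ℝ | (∀ i, 0 < y i) ∧ y 0 + y 1 + y 2 < 1}
      = F3 ⁻¹' {p : ℝ × ℝ × ℝ | 0 < p.1 ∧ 0 < p.2.1 ∧ 0 < p.2.2 ∧ p.1 + p.2.1 + p.2.2 < 1} := by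
    ext y
    simp only [mem_setOf_eq, mem_preimage, F3_apply]
    constructor
    · rintro ⟨h, hs⟩; exact ⟨h 0, h 1, h 2, hs⟩
    · rintro ⟨h0, h1, h2, hs⟩
      refine ⟨fun i => ?_, hs⟩
      fin_cases i <;> assumption
  have hKm : MeasurableSet {p : ℝ × ℝ × ℝ | 0 < p.1 ∧ 0 < p.2.1 ∧ 0 < p.2.2 ∧ p.1 + p.2.1 + p.2.2 < 1} := by
    have : IsOpen {p : ℝ × ℝ × ℝ | 0 < p.1 ∧ 0 < p.2.1 ∧ 0 < p.2.2 ∧ p.1 + p.2.1 + p.2.2 < 1} := by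
      apply IsOpen.inter (isOpen_lt continuous_const continuous_fst)
      apply IsOpen.inter (isOpen_lt continuous_const (continuous_fst.comp continuous_snd))
      apply IsOpen.inter (isOpen_lt continuous_const (continuous_snd.comp continuous_snd))
      exact isOpen_lt ((continuous_fst.add (continuous_fst.comp continuous_snd)).add
        (continuous_snd.comp continuous_snd)) continuous_const
    exact this.measurableSet
  rw [hK, F3_mp.measure_preimage hKm.nullMeasurableSet]
  have hprod : (volume : Measure (ℝ × ℝ × ℝ)) = (volume : Measure ℝ).prod volume := rfl
  rw [hprod, Measure.prod_apply hKm]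
  have hsec : ∀ a : ℝ, volume (Prod.mk a ⁻¹' {p : ℝ × ℝ × ℝ | 0 < p.1 ∧ 0 < p.2.1 ∧ 0 < p.2.2 ∧ p.1 + p.2.1 + p.2.2 < 1})
      = ENNReal.ofReal (Set.indicator (Ioo 0 1) (fun a => (1 - a) ^ 2 / 2) a) := by
    intro a
    by_cases ha : a ∈ Ioo (0:ℝ) 1
    · have : Prod.mk a ⁻¹' {p : ℝ × ℝ × ℝ | 0 < p.1 ∧ 0 < p.2.1 ∧ 0 < p.2.2 ∧ p.1 + p.2.1 + p.2.2 < 1}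
          = {q : ℝ × ℝ | 0 < q.1 ∧ 0 < q.2 ∧ q.1 + q.2 < 1 - a} := by
        ext q; simp only [mem_preimage, mem_setOf_eq]
        constructor
        · rintro ⟨_, h1, h2, h3⟩; exact ⟨h1, h2, by linarith⟩
        · rintro ⟨h1, h2, h3⟩; exact ⟨ha.1, h1, h2, by linarith⟩
      rw [this, vol_tri2 _ (by linarith [ha.2]), indicator_of_mem ha]
    · have : Prod.mk a ⁻¹' {p : ℝ × ℝ × ℝ | 0 < p.1 ∧ 0 < p.2.1 ∧ 0 < p.2.2 ∧ p.1 + p.2.1 + p.2.2 < 1}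
          = (∅ : Set (ℝ × ℝ)) := by
        ext q; simp only [mem_preimage, mem_setOf_eq, mem_empty_iff_false, iff_false]
        rintro ⟨h1, h2, h3, h4⟩
        simp only [mem_Ioo, not_and, not_lt] at ha
        have := ha h1
        linarith
      rw [this, measure_empty, indicator_of_notMem ha, ENNReal.ofReal_zero]
  simp_rw [hsec]
  have : ∫⁻ a : ℝ, ENNReal.ofReal (Set.indicator (Ioo 0 1) (fun a => (1 - a) ^ 2 / 2) a)
      = ∫⁻ a in Ioo (0:ℝ) 1, ENNReal.ofReal ((1 - a) ^ 2 / 2) := by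
    rw [← lintegral_indicator measurableSet_Ioo]
    congr 1
    ext a
    by_cases ha : a ∈ Ioo (0:ℝ) 1
    · rw [indicator_of_mem ha, indicator_of_mem ha]
    · rw [indicator_of_notMem ha, indicator_of_notMem ha, ENNReal.ofReal_zero]
  rw [this, ← ofReal_integral_eq_lintegral_ofReal]
  · congr 1
    have h1 : ∫ a in Ioo (0:ℝ) 1, (1 - a) ^ 2 / 2 = ∫ a in (0:ℝ)..1, (1 - a) ^ 2 / 2 := by
      rw [intervalIntegral.integral_of_le zero_le_one, integral_Ioc_eq_integral_Ioo]
    rw [h1]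
    have : ∀ a : ℝ, (1 - a) ^ 2 / 2 = (1/2 - a) + (1/2) * a ^ 2 := by intro a; ring
    simp_rw [this]
    rw [intervalIntegral.integral_add (intervalIntegrable_const.sub intervalIntegral.intervalIntegrable_id)
        ((intervalIntegral.intervalIntegrable_pow 2).const_mul (1/2)),
      intervalIntegral.integral_sub intervalIntegrable_const intervalIntegral.intervalIntegrable_id,
      _root_.integral_id, intervalIntegral.integral_const_mul, _root_.integral_pow,
      intervalIntegral.integral_const]
    norm_num
  · exact (((continuous_const.sub continuous_id).pow 2).div_const 2).integrableOn_Icc.mono_set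
      Ioo_subset_Icc_self
  · filter_upwards with a
    positivity

/-! ### Convex hull and cone characterizations -/

lemma hull_char (v1 v2 v3 : E3) : convexHull ℝ {(0:E3), v1, v2, v3}
    = {p | ∃ a b d : ℝ, 0 ≤ a ∧ 0 ≤ b ∧ 0 ≤ d ∧ a + b + d ≤ 1 ∧ p = a • v1 + b • v2 + d • v3} := by
  apply le_antisymm
  · apply convexHull_min
    · rintro p hp
      simp only [mem_insert_iff, mem_singleton_iff] at hp
      rcases hp with rfl | rfl | rfl | rfl
      · exact ⟨0, 0, 0, le_refl _, le_refl _, le_refl _, by norm_num, by simp⟩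
      · exact ⟨1, 0, 0, zero_le_one, le_refl _, le_refl _, by norm_num, by simp⟩
      · exact ⟨0, 1, 0, le_refl _, zero_le_one, le_refl _, by norm_num, by simp⟩
      · exact ⟨0, 0, 1, le_refl _, le_refl _, zero_le_one, by norm_num, by simp⟩
    · rintro p ⟨a, b, d, ha, hb, hd, hs, rfl⟩ q ⟨a', b', d', ha', hb', hd', hs', rfl⟩ t u ht hu htu
      refine ⟨t*a + u*a', t*b + u*b', t*d + u*d', by positivity, by positivity, by positivity,
        by nlinarith, ?_⟩
      simp only [smul_add, smul_smul, add_smul]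
      abel
  · rintro p ⟨a, b, d, ha, hb, hd, hs, rfl⟩
    have h := (convex_convexHull ℝ ({(0:E3), v1, v2, v3} : Set E3)).sum_mem
      (t := (Finset.univ : Finset (Fin 4))) (w := ![1 - (a+b+d), a, b, d]) (z := ![0, v1, v2, v3])
      (fun i _ => by fin_cases i <;> simp <;> linarith)
      (by simp [Fin.sum_univ_four]; ring)
      (fun i _ => by
        apply subset_convexHull
        fin_cases i <;> simp)
    simpa [Fin.sum_univ_four] using h

lemma cone_char (v1 v2 v3 : E3) :
    {y : E3 | ∃ t : ℝ, 0 ≤ t ∧ ∃ p ∈ convexHull ℝ {(0:E3), v1, v2, v3}, y = t • p}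
    = {p | ∃ a b d : ℝ, 0 ≤ a ∧ 0 ≤ b ∧ 0 ≤ d ∧ p = a • v1 + b • v2 + d • v3} := by
  ext y
  simp only [mem_setOf_eq]
  constructor
  · rintro ⟨t, ht, p, hp, rfl⟩
    rw [hull_char] at hp
    obtain ⟨a, b, d, ha, hb, hd, hs, rfl⟩ := hp
    exact ⟨t*a, t*b, t*d, by positivity, by positivity, by positivity, by
      simp only [smul_add, smul_smul]⟩
  · rintro ⟨a, b, d, ha, hb, hd, rfl⟩
    rcases eq_or_lt_of_le (by positivity : (0:ℝ) ≤ a + b + d) with h | h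
    · have ha0 : a = 0 := by linarith
      have hb0 : b = 0 := by linarith
      have hd0 : d = 0 := by linarith
      refine ⟨0, le_refl _, 0, ?_, by simp [ha0, hb0, hd0]⟩
      apply subset_convexHull
      simp
    · refine ⟨a + b + d, h.le, (a/(a+b+d)) • v1 + (b/(a+b+d)) • v2 + (d/(a+b+d)) • v3, ?_, ?_⟩
      · rw [hull_char]
        refine ⟨_, _, _, by positivity, by positivity, by positivity, ?_, rfl⟩
        rw [← add_div, ← add_div, div_self h.ne']
      · simp only [smul_add, smul_smul]
        rw [mul_div_cancel₀ _ h.ne', mul_div_cancel₀ _ h.ne', mul_div_cancel₀ _ h.ne']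

/-! ### The linear map sending the corner simplex to the tetrahedron -/

def Mx (x c : ℝ) : Matrix (Fin 3) (Fin 3) ℝ := !![x, x, 0; x*c, 0, 0; 1, 1, 1]

noncomputable def fx (x c : ℝ) : E3 →ₗ[ℝ] E3 :=
  ((WithLp.linearEquiv 2 ℝ (Fin 3 → ℝ)).symm.toLinearMap.comp
    (Matrix.toLin' (Mx x c))).comp (WithLp.linearEquiv 2 ℝ (Fin 3 → ℝ)).toLinearMap

lemma fx_det (x c : ℝ) : LinearMap.det (fx x c) = -(x^2*c) := by
  have : fx x c = ((WithLp.linearEquiv 2 ℝ (Fin 3 → ℝ)).symm.toLinearMap.comp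
      (Matrix.toLin' (Mx x c))).comp
      ((WithLp.linearEquiv 2 ℝ (Fin 3 → ℝ)).symm.symm.toLinearMap) := rfl
  rw [this, LinearMap.comp_assoc, LinearMap.det_conj (Matrix.toLin' (Mx x c))
    (WithLp.linearEquiv 2 ℝ (Fin 3 → ℝ)).symm]
  rw [LinearMap.det_toLin', Matrix.det_fin_three]
  simp [Mx]
  ring

lemma fx_coords (x c : ℝ) (y : E3) :
    (WithLp.equiv 2 (Fin 3 → ℝ)) (fx x c y) = (Mx x c).mulVec ((WithLp.equiv 2 (Fin 3 → ℝ)) y) := by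
  simp [fx, Matrix.toLin'_apply]

lemma fx_combo (x c : ℝ) (y : E3) :
    fx x c y = ((WithLp.equiv 2 (Fin 3 → ℝ)) y 0) • ((WithLp.equiv 2 (Fin 3 → ℝ)).symm ![x, x*c, 1])
      + ((WithLp.equiv 2 (Fin 3 → ℝ)) y 1) • ((WithLp.equiv 2 (Fin 3 → ℝ)).symm ![x, 0, 1])
      + ((WithLp.equiv 2 (Fin 3 → ℝ)) y 2) • ((WithLp.equiv 2 (Fin 3 → ℝ)).symm ![0, 0, 1]) := by
  apply (WithLp.equiv 2 (Fin 3 → ℝ)).injective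
  rw [fx_coords]
  funext i
  set v := (WithLp.equiv 2 (Fin 3 → ℝ)) y
  simp only [WithLp.equiv_apply, WithLp.ofLp_add, WithLp.ofLp_smul, WithLp.equiv_symm_apply, WithLp.ofLp_toLp, Equiv.apply_symm_apply, Pi.add_apply,
    Pi.smul_apply, smul_eq_mul]
  fin_cases i <;>
    simp [Mx, Matrix.mulVec, dotProduct, Fin.sum_univ_three, Matrix.vecHead,
      Matrix.vecTail] <;> ring

/-! ### The normalized region `Ws` -/

def Nq (x c : ℝ) (y : Fin 3 → ℝ) : ℝ :=
  (x*(y 0 + y 1))^2 + (x*c*y 0)^2 + (y 0 + y 1 + y 2)^2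

def Ws (x c : ℝ) : Set (Fin 3 → ℝ) := {y | (∀ i, 0 ≤ y i) ∧ Nq x c y < 1}

lemma Nq_cont (x c : ℝ) : Continuous (Nq x c) := by
  unfold Nq
  fun_prop

lemma meas_Ws (x c : ℝ) : MeasurableSet (Ws x c) := by
  have : Ws x c = (⋂ i, {y : Fin 3 → ℝ | 0 ≤ y i}) ∩ {y | Nq x c y < 1} := by
    ext y; simp [Ws, mem_iInter]
  rw [this]
  exact (MeasurableSet.iInter fun i =>
      measurableSet_le measurable_const (measurable_pi_apply i)).inter
    (measurableSet_lt (Nq_cont x c).measurable measurable_const)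

lemma norm_fx_lt (x c : ℝ) (y : E3) :
    ‖fx x c y‖ < 1 ↔ Nq x c ((WithLp.equiv 2 (Fin 3 → ℝ)) y) < 1 := by
  rw [EuclideanSpace.norm_eq]
  have hsum : ∑ i, ‖fx x c y i‖ ^ 2 = Nq x c ((WithLp.equiv 2 (Fin 3 → ℝ)) y) := by
    have hco : ∀ i, ‖fx x c y i‖^2 = ((Mx x c).mulVec ((WithLp.equiv 2 (Fin 3 → ℝ)) y) i)^2 := by
      intro i
      rw [Real.norm_eq_abs, sq_abs]
      exact congrArg (fun r : ℝ => r^2) (congrFun (fx_coords x c y) i)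
    rw [Fin.sum_univ_three, hco 0, hco 1, hco 2]
    set v := (WithLp.equiv 2 (Fin 3 → ℝ)) y
    simp [Mx, Matrix.mulVec, dotProduct, Fin.sum_univ_three, Matrix.vecHead,
      Matrix.vecTail, Nq]
    all_goals ring
  rw [hsum]
  constructor
  · intro h
    have h0 : (0:ℝ) ≤ Nq x c ((WithLp.equiv 2 (Fin 3 → ℝ)) y) := by unfold Nq; positivity
    nlinarith [Real.sq_sqrt h0, Real.sqrt_nonneg (Nq x c ((WithLp.equiv 2 (Fin 3 → ℝ)) y))]
  · intro h
    have h0 : (0:ℝ) ≤ Nq x c ((WithLp.equiv 2 (Fin 3 → ℝ)) y) := by unfold Nq; positivity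
    have := Real.sqrt_lt_sqrt h0 h
    simpa using this

/-! ### The key volume identity -/

lemma vol_inter (x c : ℝ) (hx : 0 < x) (hc : 0 < c) :
    volume (ball (0:E3) 1 ∩ {y : E3 | ∃ t : ℝ, 0 ≤ t ∧ ∃ p ∈ convexHull ℝ
        {(0:E3), (WithLp.equiv 2 (Fin 3 → ℝ)).symm ![x, x*c, 1],
          (WithLp.equiv 2 (Fin 3 → ℝ)).symm ![x, 0, 1],
          (WithLp.equiv 2 (Fin 3 → ℝ)).symm ![0, 0, 1]}, y = t • p})
      = ENNReal.ofReal (x^2*c) * volume (Ws x c) := by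
  set QE : Set E3 := {y : E3 | ∀ i, 0 ≤ (WithLp.equiv 2 (Fin 3 → ℝ)) y i} with hQE
  have hcone : {y : E3 | ∃ t : ℝ, 0 ≤ t ∧ ∃ p ∈ convexHull ℝ
      {(0:E3), (WithLp.equiv 2 (Fin 3 → ℝ)).symm ![x, x*c, 1],
        (WithLp.equiv 2 (Fin 3 → ℝ)).symm ![x, 0, 1],
        (WithLp.equiv 2 (Fin 3 → ℝ)).symm ![0, 0, 1]}, y = t • p} = fx x c '' QE := by
    rw [cone_char]
    ext p
    simp only [mem_setOf_eq, mem_image]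
    constructor
    · rintro ⟨a, b, d, ha, hb, hd, rfl⟩
      refine ⟨(WithLp.equiv 2 (Fin 3 → ℝ)).symm ![a, b, d], ?_, ?_⟩
      · intro i
        rw [Equiv.apply_symm_apply]
        fin_cases i <;> simpa
      · rw [fx_combo]
        simp only [Equiv.apply_symm_apply]
        norm_num
        rfl
    · rintro ⟨y, hy, rfl⟩
      exact ⟨_, _, _, hy 0, hy 1, hy 2, fx_combo x c y⟩
  rw [inter_comm, hcone, ← Set.image_inter_preimage, Measure.addHaar_image_linearMap,
    fx_det]
  have habs : |(-(x^2*c))| = x^2*c := by rw [abs_neg, abs_of_pos (by positivity)]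
  rw [habs]
  congr 1
  have hset : QE ∩ (fx x c) ⁻¹' (ball 0 1) = (MeasurableEquiv.toLp 2 (Fin 3 → ℝ)).symm ⁻¹' (Ws x c) := by
    ext y
    simp only [mem_inter_iff, mem_preimage, mem_ball_zero_iff, hQE, mem_setOf_eq,
      MeasurableEquiv.coe_toLp_symm, WithLp.equiv_apply, Ws, norm_fx_lt]
  rw [hset, (EuclideanSpace.volume_preserving_symm_measurableEquiv_toLp (Fin 3)).measure_preimage
    (meas_Ws x c).nullMeasurableSet]

/-! ### Bounds on the volume of `Ws` -/

lemma vol_U_le : volume {y : Fin 3 → ℝ | (∀ i, 0 ≤ y i) ∧ y 0 + y 1 + y 2 < 1}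
    ≤ ENNReal.ofReal (1 / 6) := by
  have hsub : {y : Fin 3 → ℝ | (∀ i, 0 ≤ y i) ∧ y 0 + y 1 + y 2 < 1}
      ⊆ {y : Fin 3 → ℝ | (∀ i, 0 < y i) ∧ y 0 + y 1 + y 2 < 1}
        ∪ ({y : Fin 3 → ℝ | y 0 = 0} ∪ ({y | y 1 = 0} ∪ {y | y 2 = 0})) := by
    intro y ⟨hy, hs⟩
    by_cases h : ∀ i, 0 < y i
    · exact Or.inl ⟨h, hs⟩
    · push_neg at h
      obtain ⟨i, hi⟩ := h
      have hi0 : y i = 0 := le_antisymm hi (hy i)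
      right
      fin_cases i
      · exact Or.inl hi0
      · exact Or.inr (Or.inl hi0)
      · exact Or.inr (Or.inr hi0)
  calc volume {y : Fin 3 → ℝ | (∀ i, 0 ≤ y i) ∧ y 0 + y 1 + y 2 < 1}
      ≤ _ := measure_mono hsub
    _ ≤ volume {y : Fin 3 → ℝ | (∀ i, 0 < y i) ∧ y 0 + y 1 + y 2 < 1}
        + (volume {y : Fin 3 → ℝ | y 0 = 0} + (volume {y : Fin 3 → ℝ | y 1 = 0}
          + volume {y : Fin 3 → ℝ | y 2 = 0})) := by
        refine le_trans (measure_union_le _ _) ?_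
        gcongr
        refine le_trans (measure_union_le _ _) ?_
        gcongr
        exact measure_union_le _ _
    _ = ENNReal.ofReal (1/6) := by
        rw [vol_K1]
        have h0 : ∀ i : Fin 3, volume {y : Fin 3 → ℝ | y i = 0} = 0 := fun i => by
          rw [volume_pi]
          exact Measure.pi_hyperplane _ i 0
        rw [h0 0, h0 1, h0 2]
        simp

lemma Ws_subset_U (x c : ℝ) :
    Ws x c ⊆ {y : Fin 3 → ℝ | (∀ i, 0 ≤ y i) ∧ y 0 + y 1 + y 2 < 1} := by
  rintro y ⟨hy, hN⟩
  refine ⟨hy, ?_⟩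
  have h1 : (y 0 + y 1 + y 2)^2 < 1 := by
    have h2 : (0:ℝ) ≤ (x*(y 0 + y 1))^2 + (x*c*y 0)^2 := by positivity
    unfold Nq at hN
    nlinarith
  nlinarith [hy 0, hy 1, hy 2]

lemma vol_Ws_le (x c : ℝ) : volume (Ws x c) ≤ ENNReal.ofReal (1/6) :=
  le_trans (measure_mono (Ws_subset_U x c)) vol_U_le

lemma vol_Ws_ne_top (x c : ℝ) : volume (Ws x c) ≠ ⊤ :=
  ne_top_of_le_ne_top (by simp) (vol_Ws_le x c)

lemma vol_Ws_lower (x c : ℝ) (hx : 0 < x) (hc : 0 < c) :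
    ENNReal.ofReal (((Real.sqrt (1+x^2*(1+c^2)))⁻¹)^3 * (1/6)) ≤ volume (Ws x c) := by
  set ρ : ℝ := 1 + x^2*(1+c^2) with hρ
  have hρ1 : (1:ℝ) ≤ ρ := by nlinarith
  have hρ0 : (0:ℝ) < ρ := by linarith
  set r : ℝ := (Real.sqrt ρ)⁻¹ with hr
  have hr0 : 0 < r := by positivity
  have hr2 : r^2 * ρ = 1 := by
    rw [hr, ← Real.sqrt_inv]
    rw [Real.sq_sqrt (by positivity)]
    field_simp
  have hsub : (fun y : Fin 3 → ℝ => r • y) '' {y | (∀ i, 0 < y i) ∧ y 0 + y 1 + y 2 < 1}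
      ⊆ Ws x c := by
    rintro z ⟨y, ⟨hy, hs⟩, rfl⟩
    dsimp only
    have hcoord : ∀ i, (r • y) i = r * y i := fun i => rfl
    have h0 : 0 ≤ r * y 0 := mul_nonneg hr0.le (hy 0).le
    have h1 : 0 ≤ r * y 1 := mul_nonneg hr0.le (hy 1).le
    have h2 : 0 ≤ r * y 2 := mul_nonneg hr0.le (hy 2).le
    constructor
    · intro i; rw [hcoord]; exact mul_nonneg hr0.le (hy i).le
    · rw [Nq]
      rw [hcoord, hcoord, hcoord]
      have hsz : r * y 0 + r * y 1 + r * y 2 < r := by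
        have := mul_lt_mul_of_pos_left hs hr0
        linarith [this]
      set s : ℝ := r * y 0 + r * y 1 + r * y 2 with hsdef
      have hss0 : 0 ≤ s := by rw [hsdef]; linarith
      have ha : 0 ≤ r * y 0 + r * y 1 := add_nonneg h0 h1
      have ha' : r * y 0 + r * y 1 ≤ s := by rw [hsdef]; linarith
      have e1 : (x*(r * y 0 + r * y 1))^2 ≤ x^2*s^2 := by
        nlinarith [mul_self_le_mul_self ha ha', sq_nonneg x]
      have hb' : r * y 0 ≤ s := by rw [hsdef]; linarith
      have e2 : (x*c*(r * y 0))^2 ≤ x^2*c^2*s^2 := by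
        nlinarith [mul_self_le_mul_self h0 hb', sq_nonneg (x*c)]
      have e3 : s^2 < r^2 := by nlinarith [hsz, hss0]
      have h4 : ρ * s^2 < ρ * r^2 := mul_lt_mul_of_pos_left e3 hρ0
      have h5 : ρ * r^2 = 1 := by rw [mul_comm]; exact hr2
      have h6 : ρ * s^2 = x^2*s^2 + x^2*c^2*s^2 + s^2 := by rw [hρ]; ring
      linarith [e1, e2, h4, h5, h6]
  calc ENNReal.ofReal (r^3 * (1/6))
      = ENNReal.ofReal |r^3| * ENNReal.ofReal (1/6) := by
        rw [← ENNReal.ofReal_mul (by positivity), abs_of_pos (by positivity)]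
    _ = volume ((fun y : Fin 3 → ℝ => r • y) '' {y | (∀ i, 0 < y i) ∧ y 0 + y 1 + y 2 < 1}) := by
        rw [← vol_K1]
        have : (fun y : Fin 3 → ℝ => r • y) '' {y | (∀ i, 0 < y i) ∧ y 0 + y 1 + y 2 < 1}
            = (r • ({y : Fin 3 → ℝ | (∀ i, 0 < y i) ∧ y 0 + y 1 + y 2 < 1} : Set (Fin 3 → ℝ)) :
              Set (Fin 3 → ℝ)) := rfl
        rw [this, Measure.addHaar_smul]
        congr 3
        simp [Module.finrank_fin_fun]
    _ ≤ volume (Ws x c) := measure_mono hsub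

lemma vol_Ws_box (x c : ℝ) (hx : 0 < x) (hc : 0 < c) :
    volume (Ws x c) ≤ ENNReal.ofReal ((x*c)⁻¹) * (ENNReal.ofReal x⁻¹ * ENNReal.ofReal 1) := by
  have hsub : Ws x c ⊆ Set.pi univ (fun i => Ico (0:ℝ) (![(x*c)⁻¹, x⁻¹, 1] i)) := by
    rintro y ⟨hy, hN⟩
    unfold Nq at hN
    have h2 : (y 0 + y 1 + y 2)^2 < 1 := by
      nlinarith [sq_nonneg (x*(y 0 + y 1)), sq_nonneg (x*c*y 0)]
    have hs1 : y 0 + y 1 + y 2 < 1 := by nlinarith [hy 0, hy 1, hy 2]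
    have h01 : (x*(y 0 + y 1))^2 < 1 := by
      nlinarith [sq_nonneg (x*c*y 0), sq_nonneg (y 0 + y 1 + y 2)]
    have hx01 : x*(y 0 + y 1) < 1 := by
      nlinarith [mul_nonneg hx.le (add_nonneg (hy 0) (hy 1))]
    have h00 : (x*c*y 0)^2 < 1 := by
      nlinarith [sq_nonneg (x*(y 0 + y 1)), sq_nonneg (y 0 + y 1 + y 2)]
    have hx00 : x*c*y 0 < 1 := by
      nlinarith [mul_nonneg (mul_nonneg hx.le hc.le) (hy 0)]
    have hb0 : y 0 < (x*c)⁻¹ := by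
      rw [← one_div, lt_div_iff₀ (by positivity : (0:ℝ) < x*c)]
      nlinarith
    have hb1 : y 1 < x⁻¹ := by
      rw [← one_div, lt_div_iff₀ hx]
      nlinarith [hy 0, mul_nonneg hx.le (hy 0)]
    have hb2 : y 2 < 1 := by nlinarith [hy 0, hy 1]
    intro i _
    fin_cases i
    · exact ⟨hy 0, by simpa using hb0⟩
    · exact ⟨hy 1, by simpa using hb1⟩
    · exact ⟨hy 2, by simpa using hb2⟩
  calc volume (Ws x c) ≤ volume (Set.pi univ (fun i => Ico (0:ℝ) (![(x*c)⁻¹, x⁻¹, 1] i))) :=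
        measure_mono hsub
    _ = ∏ i, volume (Ico (0:ℝ) (![(x*c)⁻¹, x⁻¹, 1] i)) := volume_pi_pi _
    _ = ENNReal.ofReal ((x*c)⁻¹) * (ENNReal.ofReal x⁻¹ * ENNReal.ofReal 1) := by
        rw [Fin.prod_univ_three]
        simp [Real.volume_Ico]

lemma vol_Ws_strict (c : ℝ) (hc : 0 < c) {x1 x2 : ℝ} (h1 : 0 < x1) (h12 : x1 < x2) :
    volume (Ws x2 c) < volume (Ws x1 c) := by
  have hx2 : 0 < x2 := lt_trans h1 h12
  have hsub : Ws x2 c ⊆ Ws x1 c := by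
    rintro y ⟨hy, hN⟩
    refine ⟨hy, lt_of_le_of_lt ?_ hN⟩
    unfold Nq
    have h01 : 0 ≤ y 0 + y 1 := add_nonneg (hy 0) (hy 1)
    have e1 : (x1*(y 0 + y 1))^2 ≤ (x2*(y 0 + y 1))^2 := by
      nlinarith [mul_nonneg (mul_nonneg (sub_nonneg.2 h12.le)
        (by linarith : (0:ℝ) ≤ x1 + x2)) (sq_nonneg (y 0 + y 1))]
    have e2 : (x1*c*(y 0))^2 ≤ (x2*c*(y 0))^2 := by
      nlinarith [mul_nonneg (mul_nonneg (mul_nonneg (sub_nonneg.2 h12.le)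
        (by linarith : (0:ℝ) ≤ x1 + x2)) (sq_nonneg c)) (sq_nonneg (y 0))]
    linarith
  set V : Set (Fin 3 → ℝ) := {y | (∀ i, 0 < y i) ∧ Nq x1 c y < 1 ∧ 1 < Nq x2 c y} with hV
  have hVopen : IsOpen V := by
    have : V = (⋂ i, {y : Fin 3 → ℝ | 0 < y i}) ∩ ({y | Nq x1 c y < 1} ∩ {y | 1 < Nq x2 c y}) := by
      ext y; simp [hV, mem_iInter, and_assoc]
    rw [this]
    refine IsOpen.inter (isOpen_iInter_of_finite fun i =>
      isOpen_lt continuous_const (continuous_apply i)) (IsOpen.inter ?_ ?_)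
    · exact isOpen_lt (Nq_cont x1 c) continuous_const
    · exact isOpen_lt continuous_const (Nq_cont x2 c)
  have hVsub : V ⊆ Ws x1 c := fun y hy => ⟨fun i => (hy.1 i).le, hy.2.1⟩
  have hVdisj : Disjoint (Ws x2 c) V := by
    rw [disjoint_left]
    rintro y ⟨_, hN⟩ ⟨_, _, hN2⟩
    linarith
  have hVne : V.Nonempty := by
    set P : ℝ → ℝ := fun x => 4*x^2 + x^2*c^2 + 9 with hP
    have hPpos : ∀ x : ℝ, 0 < x → 0 < P x := fun x hx => by simp only [hP]; positivity
    have hP1 : 0 < P x1 := hPpos _ h1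
    have hP2 : 0 < P x2 := hPpos _ hx2
    have hPlt : P x1 < P x2 := by
      simp only [hP]
      nlinarith [mul_pos (sub_pos.2 h12) (by linarith : (0:ℝ) < x1+x2),
        mul_nonneg (mul_pos (sub_pos.2 h12) (by linarith : (0:ℝ) < x1+x2)).le (sq_nonneg c)]
    set a : ℝ := Real.sqrt (P x1) with ha
    set b : ℝ := Real.sqrt (P x2) with hb
    have ha0 : 0 < a := Real.sqrt_pos.2 hP1
    have hb0 : 0 < b := Real.sqrt_pos.2 hP2
    have hab : a < b := Real.sqrt_lt_sqrt hP1.le hPlt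
    set t : ℝ := (a⁻¹ + b⁻¹)/2 with ht
    have ht0 : 0 < t := by positivity
    have htb : b⁻¹ < t := by
      rw [ht]
      have : a⁻¹ > b⁻¹ := by
        apply inv_strictAnti₀ ha0 hab
      linarith
    have hta : t < a⁻¹ := by
      rw [ht]
      have : b⁻¹ < a⁻¹ := inv_strictAnti₀ ha0 hab
      linarith
    refine ⟨fun _ => t, fun i => ht0, ?_, ?_⟩
    · show Nq x1 c (fun _ => t) < 1
      have hNq : Nq x1 c (fun _ => t) = t^2 * P x1 := by unfold Nq; simp only [hP]; ring
      rw [hNq]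
      have h1' : t * a < 1 := by
        rw [← inv_mul_cancel₀ ha0.ne']
        exact mul_lt_mul_of_pos_right hta ha0
      have : t^2 * P x1 = (t*a)^2 := by
        rw [ha, mul_pow, Real.sq_sqrt hP1.le]
      rw [this]
      nlinarith [mul_nonneg ht0.le ha0.le]
    · show 1 < Nq x2 c (fun _ => t)
      have hNq : Nq x2 c (fun _ => t) = t^2 * P x2 := by unfold Nq; simp only [hP]; ring
      rw [hNq]
      have h1' : 1 < t * b := by
        rw [← inv_mul_cancel₀ hb0.ne']
        exact mul_lt_mul_of_pos_right htb hb0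
      have : t^2 * P x2 = (t*b)^2 := by
        rw [hb, mul_pow, Real.sq_sqrt hP2.le]
      rw [this]
      nlinarith [mul_nonneg ht0.le hb0.le]
  have hpos : 0 < volume V := hVopen.measure_pos volume hVne
  calc volume (Ws x2 c) < volume (Ws x2 c) + volume V :=
        ENNReal.lt_add_right (vol_Ws_ne_top x2 c) hpos.ne'
    _ = volume (Ws x2 c ∪ V) := (measure_union hVdisj hVopen.measurableSet).symm
    _ ≤ volume (Ws x1 c) := measure_mono (union_subset hsub hVsub)

end Auxiliary

/-- Setup of Lemma 1: the unit sphere is centered at `O = 0`, `H = (0,0,1)` is at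
distance 1 from `O`, and in the plane `z = 1` (through `H`, perpendicular to `OH`)
we have the right triangle `ABH` with `B = (x, 0, 1)`, `A = (x, x·tan θ, 1)`, so
that `HB ⊥ AB`, `∠AHB = θ` and `BH = x`.  `η x` is the ratio of the volume of the
part of the unit ball cut out by the cone from `O` over the tetrahedron `OABH`
to the volume `x² tan θ / 6` of the tetrahedron.  Then `η` is strictly decreasing
on `(0, ∞)`, `η → 1` as `x → 0⁺`, and `η → 0` as `x → ∞`. -/
theorem eta_strictAnti_of_tetrahedron (θ : ℝ) (hθ : 0 < θ) (hθ' : θ < π / 2) :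
    let O : EuclideanSpace ℝ (Fin 3) := 0
    let H : EuclideanSpace ℝ (Fin 3) := (WithLp.equiv 2 _).symm ![0, 0, 1]
    let B : ℝ → EuclideanSpace ℝ (Fin 3) := fun x => (WithLp.equiv 2 _).symm ![x, 0, 1]
    let A : ℝ → EuclideanSpace ℝ (Fin 3) :=
      fun x => (WithLp.equiv 2 _).symm ![x, x * Real.tan θ, 1]
    let T : ℝ → Set (EuclideanSpace ℝ (Fin 3)) :=
      fun x => convexHull ℝ {O, A x, B x, H}
    let cone : ℝ → Set (EuclideanSpace ℝ (Fin 3)) :=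
      fun x => {y | ∃ t : ℝ, 0 ≤ t ∧ ∃ p ∈ T x, y = t • p}
    let Vs : ℝ → ℝ := fun x => (MeasureTheory.volume (Metric.ball O 1 ∩ cone x)).toReal
    let η : ℝ → ℝ := fun x => Vs x / (x ^ 2 * Real.tan θ / 6)
    StrictAntiOn η (Set.Ioi 0) ∧
      Filter.Tendsto η (nhdsWithin 0 (Set.Ioi 0)) (nhds 1) ∧
      Filter.Tendsto η Filter.atTop (nhds 0) := by
  intro O Hv B A T cone Vs η
  have hc : 0 < Real.tan θ := Real.tan_pos_of_pos_of_lt_pi_div_two hθ hθ'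
  set c : ℝ := Real.tan θ with hcdef
  -- the fundamental formula for η
  have hη : ∀ x : ℝ, 0 < x → η x = 6 * (volume (Ws x c)).toReal := by
    intro x hx
    have hVs : Vs x = x^2*c * (volume (Ws x c)).toReal := by
      show (volume (Metric.ball O 1 ∩ cone x)).toReal = _
      have : Metric.ball O 1 ∩ cone x
          = ball (0:E3) 1 ∩ {y : E3 | ∃ t : ℝ, 0 ≤ t ∧ ∃ p ∈ convexHull ℝ
            {(0:E3), (WithLp.equiv 2 (Fin 3 → ℝ)).symm ![x, x*c, 1],
              (WithLp.equiv 2 (Fin 3 → ℝ)).symm ![x, 0, 1],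
              (WithLp.equiv 2 (Fin 3 → ℝ)).symm ![0, 0, 1]}, y = t • p} := rfl
      rw [this, vol_inter x c hx hc, ENNReal.toReal_mul,
        ENNReal.toReal_ofReal (by positivity)]
    show Vs x / (x ^ 2 * c / 6) = _
    rw [hVs, div_eq_iff (by positivity : x ^ 2 * c / 6 ≠ 0)]
    ring
  have hUB : ∀ x : ℝ, 0 < x → η x ≤ 1 := by
    intro x hx
    rw [hη x hx]
    have := ENNReal.toReal_mono ENNReal.ofReal_ne_top (vol_Ws_le x c)
    rw [ENNReal.toReal_ofReal (by norm_num)] at this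
    linarith
  have hLB : ∀ x : ℝ, 0 < x → ((Real.sqrt (1+x^2*(1+c^2)))⁻¹)^3 ≤ η x := by
    intro x hx
    rw [hη x hx]
    have := ENNReal.toReal_mono (vol_Ws_ne_top x c) (vol_Ws_lower x c hx hc)
    rw [ENNReal.toReal_ofReal (by positivity)] at this
    linarith
  have hNN : ∀ x : ℝ, 0 < x → 0 ≤ η x := by
    intro x hx
    rw [hη x hx]
    positivity
  refine ⟨?_, ?_, ?_⟩
  · -- strictly decreasing
    intro x1 hx1 x2 hx2 h12
    rw [hη x1 hx1, hη x2 hx2]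
    have := (ENNReal.toReal_lt_toReal (vol_Ws_ne_top x2 c) (vol_Ws_ne_top x1 c)).2
      (vol_Ws_strict c hc hx1 h12)
    linarith
  · -- limit 1 at 0⁺
    have hg : Tendsto (fun x : ℝ => ((Real.sqrt (1+x^2*(1+c^2)))⁻¹)^3)
        (nhdsWithin 0 (Set.Ioi 0)) (nhds 1) := by
      have hca : ContinuousAt (fun x : ℝ => ((Real.sqrt (1+x^2*(1+c^2)))⁻¹)^3) 0 := by
        apply ContinuousAt.pow
        apply ContinuousAt.inv₀
        · exact (Real.continuous_sqrt.comp (by fun_prop)).continuousAt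
        · norm_num
      have h := hca.tendsto.mono_left (nhdsWithin_le_nhds (s := Set.Ioi (0:ℝ)))
      convert h using 2
      norm_num
    apply tendsto_of_tendsto_of_tendsto_of_le_of_le' hg tendsto_const_nhds
    · exact eventually_mem_nhdsWithin.mono (fun x hx => hLB x hx)
    · exact eventually_mem_nhdsWithin.mono (fun x hx => hUB x hx)
  · -- limit 0 at ∞
    have hub2 : ∀ x : ℝ, 0 < x → η x ≤ 6 * ((x*c)⁻¹ * x⁻¹) := by
      intro x hx
      rw [hη x hx]
      have h := ENNReal.toReal_mono (by
          exact ENNReal.mul_ne_top ENNReal.ofReal_ne_top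
            (ENNReal.mul_ne_top ENNReal.ofReal_ne_top ENNReal.ofReal_ne_top))
        (vol_Ws_box x c hx hc)
      rw [ENNReal.toReal_mul, ENNReal.toReal_mul, ENNReal.toReal_ofReal (by positivity),
        ENNReal.toReal_ofReal (by positivity), ENNReal.toReal_ofReal (by norm_num)] at h
      nlinarith [h]
    have hg : Tendsto (fun x : ℝ => 6 * ((x*c)⁻¹ * x⁻¹)) atTop (nhds 0) := by
      have h1 : Tendsto (fun x : ℝ => (x*c)⁻¹) atTop (nhds 0) :=
        (Tendsto.atTop_mul_const hc tendsto_id).inv_tendsto_atTop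
      have h2 : Tendsto (fun x : ℝ => x⁻¹) atTop (nhds (0:ℝ)) := tendsto_inv_atTop_zero
      have h12 := (h1.mul h2).const_mul (6:ℝ)
      convert h12 using 2
      norm_num
    apply tendsto_of_tendsto_of_tendsto_of_le_of_le' tendsto_const_nhds hg
    · exact (eventually_gt_atTop 0).mono (fun x hx => hNN x hx)
    · exact (eventually_gt_atTop 0).mono (fun x hx => hub2 x hx)
end

section
/- The solid angle subtended at the apex O by the base of a regular tight triangular pyramid (apex at distance 1 above the center of an equilateral triangle whose incircle has radius 1/√3) is strictly greater than 4π/13; in fact 13 times this solid angle exceeds 4π. -/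
open Real MeasureTheory Metric Set

namespace SAT

abbrev P := Fin 3 → ℝ

def box (u0 u1 Y z0 z1 : ℝ) : Set P :=
  Set.univ.pi ![Ioc (Real.sqrt 3 * u0) (Real.sqrt 3 * u1), Ioc (-Y) Y, Ioc z0 z1]

lemma mem_box {p : P} {u0 u1 Y z0 z1 : ℝ} :
    p ∈ box u0 u1 Y z0 z1 ↔
      (Real.sqrt 3 * u0 < p 0 ∧ p 0 ≤ Real.sqrt 3 * u1) ∧
      (-Y < p 1 ∧ p 1 ≤ Y) ∧ (z0 < p 2 ∧ p 2 ≤ z1) := by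
  simp [box, Set.mem_pi, Fin.forall_fin_succ, Set.mem_Ioc]

lemma measurableSet_box (u0 u1 Y z0 z1 : ℝ) : MeasurableSet (box u0 u1 Y z0 z1) :=
  MeasurableSet.univ_pi (fun i => by fin_cases i <;> exact measurableSet_Ioc)

lemma volume_box {u0 u1 Y z0 z1 : ℝ} (h01 : u0 ≤ u1) (hY : 0 ≤ Y) :
    volume (box u0 u1 Y z0 z1)
      = ENNReal.ofReal ((u1 - u0) * (2 * Y) * (z1 - z0) * Real.sqrt 3) := by
  have h3 : (0:ℝ) ≤ Real.sqrt 3 := Real.sqrt_nonneg 3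
  rw [box, volume_pi_pi, Fin.prod_univ_three]
  simp only [Matrix.cons_val_zero, Matrix.cons_val_one, Matrix.head_cons,
    Matrix.cons_val_two, Matrix.tail_cons]
  rw [Real.volume_Ioc, Real.volume_Ioc, Real.volume_Ioc,
    ← ENNReal.ofReal_mul (by nlinarith [mul_le_mul_of_nonneg_left h01 h3]),
    ← ENNReal.ofReal_mul (by nlinarith [mul_le_mul_of_nonneg_left h01 h3])]
  congr 1
  have : Real.sqrt 3 * u1 - Real.sqrt 3 * u0 = (u1 - u0) * Real.sqrt 3 := by ring
  rw [this]; ring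

/-! rows: lists of (u0,u1,Y) sharing a z-slab -/

def row (z0 z1 : ℝ) : List (ℝ × ℝ × ℝ) → Set P
  | [] => ∅
  | (u0, u1, Y) :: L => box u0 u1 Y z0 z1 ∪ row z0 z1 L

def rowSum : List (ℝ × ℝ × ℝ) → ℝ
  | [] => 0
  | (u0, u1, Y) :: L => (u1 - u0) * (2 * Y) + rowSum L

def rowOK : ℝ → List (ℝ × ℝ × ℝ) → Prop
  | _, [] => True
  | c, (u0, u1, Y) :: L => c ≤ u0 ∧ u0 ≤ u1 ∧ 0 ≤ Y ∧ rowOK u1 L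

lemma rowOK_mono {c c' : ℝ} {L} (h : rowOK c L) (hc : c' ≤ c) : rowOK c' L := by
  cases L with
  | nil => trivial
  | cons a L =>
    obtain ⟨h1, h2⟩ := h
    exact ⟨le_trans hc h1, h2⟩

lemma rowSum_nonneg {c : ℝ} {L} (h : rowOK c L) : 0 ≤ rowSum L := by
  induction L generalizing c with
  | nil => simp [rowSum]
  | cons a L ih =>
    obtain ⟨u0, u1, Y⟩ := a
    obtain ⟨h1, h2, h3, h4⟩ := h
    have := ih h4
    have : (0:ℝ) ≤ (u1 - u0) * (2 * Y) := by nlinarith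
    simp only [rowSum]; nlinarith [ih h4]

lemma measurableSet_row (z0 z1 : ℝ) (L) : MeasurableSet (row z0 z1 L) := by
  induction L with
  | nil => exact MeasurableSet.empty
  | cons a L ih => exact (measurableSet_box _ _ _ _ _).union ih

lemma row_subset_x {z0 z1 c : ℝ} {L} (h : rowOK c L) :
    row z0 z1 L ⊆ {p : P | Real.sqrt 3 * c < p 0} := by
  induction L generalizing c with
  | nil => simp [row]
  | cons a L ih =>
    obtain ⟨u0, u1, Y⟩ := a
    obtain ⟨h1, h2, h3, h4⟩ := h
    intro p hp
    have h3' : (0:ℝ) ≤ Real.sqrt 3 := Real.sqrt_nonneg 3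
    rcases hp with hp | hp
    · have := (mem_box.mp hp).1.1
      have : Real.sqrt 3 * c ≤ Real.sqrt 3 * u0 := by nlinarith
      show Real.sqrt 3 * c < p 0
      linarith [(mem_box.mp hp).1.1]
    · have := ih (rowOK_mono h4 (le_trans h1 h2)) hp
      exact this

lemma row_subset_z {z0 z1 : ℝ} {L} :
    row z0 z1 L ⊆ {p : P | z0 < p 2 ∧ p 2 ≤ z1} := by
  induction L with
  | nil => simp [row]
  | cons a L ih =>
    obtain ⟨u0, u1, Y⟩ := a
    intro p hp
    rcases hp with hp | hp
    · exact (mem_box.mp hp).2.2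
    · exact ih hp

lemma volume_row {z0 z1 c : ℝ} {L} (hz : z0 ≤ z1) (h : rowOK c L) :
    volume (row z0 z1 L) = ENNReal.ofReal (rowSum L * (z1 - z0) * Real.sqrt 3) := by
  induction L generalizing c with
  | nil => simp [row, rowSum]
  | cons a L ih =>
    obtain ⟨u0, u1, Y⟩ := a
    obtain ⟨h1, h2, h3, h4⟩ := h
    have hd : Disjoint (box u0 u1 Y z0 z1) (row z0 z1 L) := by
      rw [Set.disjoint_left]
      intro p hp hp'
      have hx := (mem_box.mp hp).1.2
      have := row_subset_x h4 hp'
      exact absurd hx (not_le.mpr this)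
    rw [row, measure_union hd (measurableSet_row _ _ _), volume_box h2 h3, ih h4]
    have h3' : (0:ℝ) ≤ Real.sqrt 3 := Real.sqrt_nonneg 3
    have e1 : (0:ℝ) ≤ (u1 - u0) * (2 * Y) * (z1 - z0) * Real.sqrt 3 :=
      mul_nonneg (mul_nonneg (mul_nonneg (by linarith) (by linarith)) (by linarith)) h3'
    have e2 : (0:ℝ) ≤ rowSum L * (z1 - z0) * Real.sqrt 3 :=
      mul_nonneg (mul_nonneg (rowSum_nonneg h4) (by linarith)) h3'
    rw [← ENNReal.ofReal_add e1 e2]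
    congr 1
    simp only [rowSum]; ring

/-! slabs -/

def slabs : List (ℝ × ℝ × List (ℝ × ℝ × ℝ)) → Set P
  | [] => ∅
  | (z0, z1, L) :: S => row z0 z1 L ∪ slabs S

def slabsSum : List (ℝ × ℝ × List (ℝ × ℝ × ℝ)) → ℝ
  | [] => 0
  | (z0, z1, L) :: S => rowSum L * (z1 - z0) + slabsSum S

def slabsOK : ℝ → List (ℝ × ℝ × List (ℝ × ℝ × ℝ)) → Prop
  | _, [] => True
  | c, (z0, z1, L) :: S => c ≤ z0 ∧ z0 ≤ z1 ∧ rowOK (-1) L ∧ slabsOK z1 S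

lemma slabsOK_mono {c c' : ℝ} {S} (h : slabsOK c S) (hc : c' ≤ c) : slabsOK c' S := by
  cases S with
  | nil => trivial
  | cons a S => obtain ⟨h1, h2⟩ := h; exact ⟨le_trans hc h1, h2⟩

lemma measurableSet_slabs (S) : MeasurableSet (slabs S) := by
  induction S with
  | nil => exact MeasurableSet.empty
  | cons a S ih => exact (measurableSet_row _ _ _).union ih

lemma slabs_subset_z {c : ℝ} {S} (h : slabsOK c S) :
    slabs S ⊆ {p : P | c < p 2} := by
  induction S generalizing c with
  | nil => simp [slabs]
  | cons a S ih =>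
    obtain ⟨z0, z1, L⟩ := a
    obtain ⟨h1, h2, h3, h4⟩ := h
    intro p hp
    rcases hp with hp | hp
    · have := (row_subset_z hp).1
      show c < p 2; linarith
    · have := ih (slabsOK_mono h4 (le_trans h1 h2)) hp
      show c < p 2; exact this

lemma slabsSum_nonneg {c : ℝ} {S} (h : slabsOK c S) : 0 ≤ slabsSum S := by
  induction S generalizing c with
  | nil => simp [slabsSum]
  | cons a S ih =>
    obtain ⟨z0, z1, L⟩ := a
    obtain ⟨h1, h2, h3, h4⟩ := h
    have e1 : (0:ℝ) ≤ rowSum L * (z1 - z0) := mul_nonneg (rowSum_nonneg h3) (by linarith)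
    have := ih h4
    simp only [slabsSum]; linarith

lemma volume_slabs {c : ℝ} {S} (h : slabsOK c S) :
    volume (slabs S) = ENNReal.ofReal (slabsSum S * Real.sqrt 3) := by
  induction S generalizing c with
  | nil => simp [slabs, slabsSum]
  | cons a S ih =>
    obtain ⟨z0, z1, L⟩ := a
    obtain ⟨h1, h2, h3, h4⟩ := h
    have hd : Disjoint (row z0 z1 L) (slabs S) := by
      rw [Set.disjoint_left]
      intro p hp hp'
      have hz2 := (row_subset_z hp).2
      have := slabs_subset_z h4 hp'
      simp only [Set.mem_setOf_eq] at this
      linarith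
    rw [slabs, measure_union hd (measurableSet_slabs _), volume_row h2 h3, ih h4]
    have h3' : (0:ℝ) ≤ Real.sqrt 3 := Real.sqrt_nonneg 3
    have e1 : (0:ℝ) ≤ rowSum L * (z1 - z0) * Real.sqrt 3 :=
      mul_nonneg (mul_nonneg (rowSum_nonneg h3) (by linarith)) h3'
    have e2 : (0:ℝ) ≤ slabsSum S * Real.sqrt 3 := mul_nonneg (slabsSum_nonneg h4) h3'
    rw [← ENNReal.ofReal_add e1 e2]
    congr 1
    simp only [slabsSum]; ring


/-- the target region in coordinates -/
def T : Set P :=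
  {p : P | ((p 0)^2 + (p 1)^2 + (p 2)^2 < 1 ∧ 0 < p 2) ∧
    0 ≤ Real.sqrt 3 * p 0 + p 2 ∧
    Real.sqrt 3 * p 0 + 3 * p 1 ≤ 2 * p 2 ∧
    Real.sqrt 3 * p 0 - 3 * p 1 ≤ 2 * p 2}

def boxIn (u0 u1 Y z0 z1 : ℝ) : Prop :=
  0 < z0 ∧ 0 ≤ 3*u0 + z0 ∧ 3*Y ≤ 2*z0 - 3*u1 ∧
    3*u0^2 + Y^2 + z1^2 < 1 ∧ 3*u1^2 + Y^2 + z1^2 < 1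

lemma box_subset_T {u0 u1 Y z0 z1 : ℝ} (h : boxIn u0 u1 Y z0 z1) :
    box u0 u1 Y z0 z1 ⊆ T := by
  obtain ⟨h1, h2, h3, h4, h5⟩ := h
  intro p hp
  obtain ⟨⟨hx0, hx1⟩, ⟨hy0, hy1⟩, hz0, hz1⟩ := mem_box.mp hp
  have s0 : (0:ℝ) ≤ Real.sqrt 3 := Real.sqrt_nonneg 3
  have s3 : Real.sqrt 3 * Real.sqrt 3 = 3 := Real.mul_self_sqrt (by norm_num)
  have hx2 : (p 0)^2 ≤ 3*u0^2 ∨ (p 0)^2 ≤ 3*u1^2 := by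
    rcases le_or_gt 0 (p 0) with hc | hc
    · right; nlinarith
    · left; nlinarith
  have hy2 : (p 1)^2 ≤ Y^2 := by nlinarith
  have hz2 : (p 2)^2 ≤ z1^2 := by nlinarith
  refine ⟨⟨?_, by linarith⟩, ?_, ?_, ?_⟩
  · rcases hx2 with hc | hc
    · nlinarith
    · nlinarith
  · nlinarith
  · nlinarith
  · nlinarith

def rowIn (z0 z1 : ℝ) : List (ℝ × ℝ × ℝ) → Prop
  | [] => True
  | (u0, u1, Y) :: L => boxIn u0 u1 Y z0 z1 ∧ rowIn z0 z1 L

def slabsIn : List (ℝ × ℝ × List (ℝ × ℝ × ℝ)) → Prop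
  | [] => True
  | (z0, z1, L) :: S => rowIn z0 z1 L ∧ slabsIn S

lemma row_subset_T {z0 z1 : ℝ} {L} (h : rowIn z0 z1 L) : row z0 z1 L ⊆ T := by
  induction L with
  | nil => simp [row]
  | cons a L ih =>
    obtain ⟨u0, u1, Y⟩ := a
    exact Set.union_subset (box_subset_T h.1) (ih h.2)

lemma slabs_subset_T {S} (h : slabsIn S) : slabs S ⊆ T := by
  induction S with
  | nil => simp [slabs]
  | cons a S ih =>
    obtain ⟨z0, z1, L⟩ := a
    exact Set.union_subset (row_subset_T h.1) (ih h.2)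

abbrev E := EuclideanSpace ℝ (Fin 3)

noncomputable def Afun : Fin 3 → E := fun k =>
  (WithLp.equiv 2 _).symm
    ![(2 / Real.sqrt 3) * Real.cos (2 * π * k / 3),
      (2 / Real.sqrt 3) * Real.sin (2 * π * k / 3), 1]

def coneSet : Set E :=
  {y | ∃ t : ℝ, 0 ≤ t ∧ ∃ p ∈ convexHull ℝ (Set.range Afun), y = t • p}

def C : Set E :=
  {y | 0 ≤ Real.sqrt 3 * y 0 + y 2 ∧
       Real.sqrt 3 * y 0 + 3 * y 1 ≤ 2 * y 2 ∧
       Real.sqrt 3 * y 0 - 3 * y 1 ≤ 2 * y 2}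

lemma sqrt3_pos : (0:ℝ) < Real.sqrt 3 := Real.sqrt_pos.mpr (by norm_num)
lemma sqrt3_sq : Real.sqrt 3 * Real.sqrt 3 = 3 := Real.mul_self_sqrt (by norm_num)
lemma sqrt3_inv : Real.sqrt 3 * (1 / Real.sqrt 3) = 1 := by
  rw [mul_one_div, div_self (ne_of_gt sqrt3_pos)]

lemma Afun_apply (k : Fin 3) (i : Fin 3) :
    Afun k i =
      ![(2 / Real.sqrt 3) * Real.cos (2 * π * k / 3),
        (2 / Real.sqrt 3) * Real.sin (2 * π * k / 3), 1] i := rfl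

lemma cast1 : ((1 : Fin 3) : ℝ) = 1 := by norm_num
lemma cast2 : ((2 : Fin 3) : ℝ) = 2 := by norm_num

lemma cos1 : Real.cos (2 * π * ((1:Fin 3):ℝ) / 3) = -(1/2) := by
  rw [cast1, show 2 * π * (1:ℝ) / 3 = π - π/3 by ring, Real.cos_pi_sub,
    Real.cos_pi_div_three]
lemma sin1 : Real.sin (2 * π * ((1:Fin 3):ℝ) / 3) = Real.sqrt 3 / 2 := by
  rw [cast1, show 2 * π * (1:ℝ) / 3 = π - π/3 by ring, Real.sin_pi_sub,
    Real.sin_pi_div_three]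
lemma cos2 : Real.cos (2 * π * ((2:Fin 3):ℝ) / 3) = -(1/2) := by
  rw [cast2, show 2 * π * (2:ℝ) / 3 = π - -(π/3) by ring, Real.cos_pi_sub,
    Real.cos_neg, Real.cos_pi_div_three]
lemma sin2 : Real.sin (2 * π * ((2:Fin 3):ℝ) / 3) = -(Real.sqrt 3 / 2) := by
  rw [cast2, show 2 * π * (2:ℝ) / 3 = π - -(π/3) by ring, Real.sin_pi_sub,
    Real.sin_neg, Real.sin_pi_div_three]

lemma hA00 : Afun 0 0 = 2 / Real.sqrt 3 := by
  rw [Afun_apply, Matrix.cons_val_zero]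
  norm_num
lemma hA01 : Afun 0 1 = 0 := by
  rw [Afun_apply, Matrix.cons_val_one, Matrix.cons_val_zero]
  norm_num
lemma hA02 : Afun 0 2 = 1 := by
  rw [Afun_apply]
  rfl
lemma hA10 : Afun 1 0 = -(1 / Real.sqrt 3) := by
  rw [Afun_apply, Matrix.cons_val_zero, cos1]
  ring
lemma hA11 : Afun 1 1 = 1 := by
  rw [Afun_apply, Matrix.cons_val_one, Matrix.cons_val_zero, sin1]
  rw [div_mul_div_comm, mul_comm (2:ℝ) (Real.sqrt 3), div_self]
  exact ne_of_gt (by nlinarith [sqrt3_pos])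
lemma hA12 : Afun 1 2 = 1 := by
  rw [Afun_apply]
  rfl
lemma hA20 : Afun 2 0 = -(1 / Real.sqrt 3) := by
  rw [Afun_apply, Matrix.cons_val_zero, cos2]
  ring
lemma hA21 : Afun 2 1 = -1 := by
  rw [Afun_apply, Matrix.cons_val_one, Matrix.cons_val_zero, sin2]
  rw [mul_neg, div_mul_div_comm, mul_comm (2:ℝ) (Real.sqrt 3), neg_eq_iff_eq_neg,
    neg_neg, div_self]
  exact ne_of_gt (by nlinarith [sqrt3_pos])
lemma hA22 : Afun 2 2 = 1 := by
  rw [Afun_apply]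
  rfl

lemma sqrt3_inv2 : Real.sqrt 3 * (2 / Real.sqrt 3) = 2 := by
  rw [mul_div_assoc', mul_comm, mul_div_assoc, div_self (ne_of_gt sqrt3_pos), mul_one]
lemma sqrt3_invneg : Real.sqrt 3 * (-(1 / Real.sqrt 3)) = -1 := by
  rw [mul_neg, sqrt3_inv]

lemma vertex0_mem : Afun 0 ∈ C := by
  refine ⟨?_, ?_, ?_⟩ <;> simp only [Set.mem_setOf_eq, hA00, hA01, hA02] <;>
    linarith [sqrt3_inv2]
lemma vertex1_mem : Afun 1 ∈ C := by
  refine ⟨?_, ?_, ?_⟩ <;> simp only [Set.mem_setOf_eq, hA10, hA11, hA12] <;>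
    linarith [sqrt3_invneg]
lemma vertex2_mem : Afun 2 ∈ C := by
  refine ⟨?_, ?_, ?_⟩ <;> simp only [Set.mem_setOf_eq, hA20, hA21, hA22] <;>
    linarith [sqrt3_invneg]

lemma convex_C : Convex ℝ C := by
  intro x hx y hy a b ha hb hab
  obtain ⟨hx1, hx2, hx3⟩ := hx
  obtain ⟨hy1, hy2, hy3⟩ := hy
  have e : ∀ i : Fin 3, (a • x + b • y) i = a * x i + b * y i := fun i => rfl
  refine ⟨?_, ?_, ?_⟩ <;> simp only [Set.mem_setOf_eq, e] <;> nlinarith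

lemma hull_subset_C : convexHull ℝ (Set.range Afun) ⊆ C := by
  apply convexHull_min _ convex_C
  rintro _ ⟨k, rfl⟩
  fin_cases k
  · exact vertex0_mem
  · exact vertex1_mem
  · exact vertex2_mem

lemma coneSet_eq : coneSet = C := by
  apply Set.Subset.antisymm
  · rintro y ⟨t, ht, p, hp, rfl⟩
    obtain ⟨h1, h2, h3⟩ := hull_subset_C hp
    have e : ∀ i : Fin 3, (t • p) i = t * p i := fun i => rfl
    refine ⟨?_, ?_, ?_⟩ <;> simp only [Set.mem_setOf_eq, e] <;> nlinarith
  · intro y hy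
    obtain ⟨h1, h2, h3⟩ := hy
    set x := y 0 with hxd
    set w := y 1 with hwd
    set z := y 2 with hzd
    have hz : 0 ≤ z := by nlinarith
    rcases eq_or_lt_of_le hz with hz0 | hz0
    · -- y = 0
      have hx0 : Real.sqrt 3 * x = 0 := by nlinarith
      have hx0' : x = 0 := by
        rcases mul_eq_zero.mp hx0 with h | h
        · exact absurd h (ne_of_gt sqrt3_pos)
        · exact h
      have hw0 : w = 0 := by nlinarith
      refine ⟨0, le_refl 0, Afun 0, subset_convexHull ℝ _ ⟨0, rfl⟩, ?_⟩
      rw [zero_smul]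
      ext i
      fin_cases i
      · exact hx0'
      · exact hw0
      · exact hz0.symm
    · -- z > 0
      set c0 := (Real.sqrt 3 * x + z) / (3 * z) with hc0
      set c1 := (2 * z - Real.sqrt 3 * x + 3 * w) / (6 * z) with hc1
      set c2 := (2 * z - Real.sqrt 3 * x - 3 * w) / (6 * z) with hc2
      have hc0n : 0 ≤ c0 := div_nonneg (by linarith) (by linarith)
      have hc1n : 0 ≤ c1 := div_nonneg (by linarith) (by linarith)
      have hc2n : 0 ≤ c2 := div_nonneg (by linarith) (by linarith)
      have hsum : c0 + c1 + c2 = 1 := by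
        rw [hc0, hc1, hc2]
        field_simp
        ring
      refine ⟨z, le_of_lt hz0, c0 • Afun 0 + c1 • Afun 1 + c2 • Afun 2, ?_, ?_⟩
      · have : c0 • Afun 0 + c1 • Afun 1 + c2 • Afun 2
            = ∑ i : Fin 3, ![c0, c1, c2] i • Afun i := by
          rw [Fin.sum_univ_three]
          norm_num
          rfl
        rw [this]
        exact (convex_convexHull ℝ (Set.range Afun)).sum_mem
          (fun i _ => by fin_cases i <;> simpa)
          (by rw [Fin.sum_univ_three]; simpa using hsum)
          (fun i _ => subset_convexHull ℝ _ ⟨i, rfl⟩)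
      · have e : ∀ (q r s : E) (i : Fin 3),
            (z • (q + r + s)) i = z * (q i + r i + s i) := fun q r s i => rfl
        have e2 : ∀ (c : ℝ) (q : E) (i : Fin 3), (c • q) i = c * q i := fun c q i => rfl
        ext i
        fin_cases i
        · show x = (z • (c0 • Afun 0 + c1 • Afun 1 + c2 • Afun 2)) 0
          rw [e]
          rw [e2, e2, e2, hA00, hA10, hA20, hc0, hc1, hc2]
          field_simp
          ring
        · show w = (z • (c0 • Afun 0 + c1 • Afun 1 + c2 • Afun 2)) 1
          rw [e]
          rw [e2, e2, e2, hA01, hA11, hA21, hc0, hc1, hc2]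
          field_simp
          ring
        · show z = (z • (c0 • Afun 0 + c1 • Afun 1 + c2 • Afun 2)) 2
          rw [e]
          rw [e2, e2, e2, hA02, hA12, hA22]
          simp only [mul_one]
          rw [hsum, mul_one]


lemma coord_measurable (i : Fin 3) : Measurable (fun y : E => y i) :=
  (measurable_pi_apply i).comp ((MeasurableEquiv.toLp 2 (Fin 3 → ℝ)).symm).measurable

lemma measurable_C : MeasurableSet C := by
  have h1 : MeasurableSet {y : E | 0 ≤ Real.sqrt 3 * y 0 + y 2} :=
    measurableSet_le measurable_const (((coord_measurable 0).const_mul _).add (coord_measurable 2))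
  have h2 : MeasurableSet {y : E | Real.sqrt 3 * y 0 + 3 * y 1 ≤ 2 * y 2} :=
    measurableSet_le (((coord_measurable 0).const_mul _).add ((coord_measurable 1).const_mul 3))
      ((coord_measurable 2).const_mul 2)
  have h3 : MeasurableSet {y : E | Real.sqrt 3 * y 0 - 3 * y 1 ≤ 2 * y 2} :=
    measurableSet_le (((coord_measurable 0).const_mul _).sub ((coord_measurable 1).const_mul 3))
      ((coord_measurable 2).const_mul 2)
  exact h1.inter (h2.inter h3)

lemma T_subset_preimage :
    T ⊆ ((MeasurableEquiv.toLp 2 (Fin 3 → ℝ)).symm).symm ⁻¹' (ball (0:E) 1 ∩ C) := by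
  intro p hp
  obtain ⟨⟨hball, hz⟩, h1, h2, h3⟩ := hp
  have hco : ∀ i : Fin 3, (((MeasurableEquiv.toLp 2 (Fin 3 → ℝ)).symm).symm p) i = p i :=
    fun i => rfl
  constructor
  · rw [mem_ball_zero_iff, EuclideanSpace.norm_eq]
    rw [Real.sqrt_lt' one_pos]
    rw [Fin.sum_univ_three]
    simp only [hco, Real.norm_eq_abs, sq_abs]
    rw [one_pow]
    exact hball
  · exact ⟨by rw [hco, hco]; exact h1, by rw [hco, hco, hco]; exact h2,
      by rw [hco, hco, hco]; exact h3⟩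

lemma lower_bound {S : List (ℝ × ℝ × List (ℝ × ℝ × ℝ))}
    (hOK : slabsOK 0 S) (hIn : slabsIn S) :
    ENNReal.ofReal (slabsSum S * Real.sqrt 3) ≤ volume (ball (0:E) 1 ∩ coneSet) := by
  have hS : MeasurableSet (ball (0:E) 1 ∩ C) := measurableSet_ball.inter measurable_C
  have hf : MeasurePreserving ((MeasurableEquiv.toLp 2 (Fin 3 → ℝ)).symm).symm
      (volume : Measure (Fin 3 → ℝ)) (volume : Measure E) :=
    (EuclideanSpace.volume_preserving_symm_measurableEquiv_toLp (Fin 3)).symm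
  have key : volume (((MeasurableEquiv.toLp 2 (Fin 3 → ℝ)).symm).symm ⁻¹' (ball (0:E) 1 ∩ C))
      = volume (ball (0:E) 1 ∩ C) :=
    hf.measure_preimage hS.nullMeasurableSet
  rw [coneSet_eq, ← key, ← volume_slabs hOK]
  exact measure_mono (Set.Subset.trans (slabs_subset_T hIn) T_subset_preimage)

lemma final_bounds {Q : ℝ}
    (hQle : ENNReal.ofReal (Q * Real.sqrt 3) ≤ volume (ball (0:E) 1 ∩ coneSet))
    (hQ1 : 0.1874 ≤ Q) :
    4 * π / 13 < 3 * (volume (ball (0:E) 1 ∩ coneSet)).toReal ∧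
    4 * π < 13 * (3 * (volume (ball (0:E) 1 ∩ coneSet)).toReal) := by
  have hfin : volume (ball (0:E) 1 ∩ coneSet) ≠ ⊤ :=
    ne_of_lt (lt_of_le_of_lt (measure_mono Set.inter_subset_left) measure_ball_lt_top)
  have hQ0 : (0:ℝ) ≤ Q * Real.sqrt 3 :=
    mul_nonneg (by linarith) (le_of_lt sqrt3_pos)
  have h1 : Q * Real.sqrt 3 ≤ (volume (ball (0:E) 1 ∩ coneSet)).toReal := by
    have := ENNReal.toReal_mono hfin hQle
    rwa [ENNReal.toReal_ofReal hQ0] at this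
  have hs : (1.7320508 : ℝ) ≤ Real.sqrt 3 := by
    nlinarith [sqrt3_sq, sqrt3_pos]
  have hpi : π < 3.141593 := Real.pi_lt_d6
  have hprod : (0.1874 : ℝ) * 1.7320508 ≤ Q * Real.sqrt 3 := by
    apply mul_le_mul hQ1 hs (by norm_num) (by linarith)
  constructor
  · rw [div_lt_iff₀ (by norm_num : (0:ℝ) < 13)]
    nlinarith
  · nlinarith
noncomputable def DATA : List (ℝ × ℝ × List (ℝ × ℝ × ℝ)) := [
  ((5/32 : ℝ), (1/4 : ℝ), [((-5/96 : ℝ), (-65/1536 : ℝ), (75/512 : ℝ)), ((-65/1536 : ℝ), (-25/768 : ℝ), (35/256 : ℝ)), ((-25/768 : ℝ), (-35/1536 : ℝ), (65/512 : ℝ)), ((-35/1536 : ℝ), (-5/384 : ℝ), (15/128 : ℝ)), ((-5/384 : ℝ), (-5/1536 : ℝ), (55/512 : ℝ)), ((-5/1536 : ℝ), (5/768 : ℝ), (25/256 : ℝ))]),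
  ((1/4 : ℝ), (5/16 : ℝ), [((-1/12 : ℝ), (-13/192 : ℝ), (15/64 : ℝ)), ((-13/192 : ℝ), (-5/96 : ℝ), (7/32 : ℝ)), ((-5/96 : ℝ), (-7/192 : ℝ), (13/64 : ℝ)), ((-7/192 : ℝ), (-1/48 : ℝ), (3/16 : ℝ)), ((-1/48 : ℝ), (-1/192 : ℝ), (11/64 : ℝ)), ((-1/192 : ℝ), (1/96 : ℝ), (5/32 : ℝ)), ((1/96 : ℝ), (5/192 : ℝ), (9/64 : ℝ)), ((5/192 : ℝ), (1/24 : ℝ), (1/8 : ℝ)), ((1/24 : ℝ), (1/16 : ℝ), (5/48 : ℝ)), ((1/16 : ℝ), (1/12 : ℝ), (1/12 : ℝ))]),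
  ((5/16 : ℝ), (3/8 : ℝ), [((-5/48 : ℝ), (-65/768 : ℝ), (75/256 : ℝ)), ((-65/768 : ℝ), (-25/384 : ℝ), (35/128 : ℝ)), ((-25/384 : ℝ), (-35/768 : ℝ), (65/256 : ℝ)), ((-35/768 : ℝ), (-5/192 : ℝ), (15/64 : ℝ)), ((-5/192 : ℝ), (-5/768 : ℝ), (55/256 : ℝ)), ((-5/768 : ℝ), (5/384 : ℝ), (25/128 : ℝ)), ((5/384 : ℝ), (25/768 : ℝ), (45/256 : ℝ)), ((25/768 : ℝ), (5/96 : ℝ), (5/32 : ℝ)), ((5/96 : ℝ), (5/64 : ℝ), (25/192 : ℝ)), ((5/64 : ℝ), (5/48 : ℝ), (5/48 : ℝ)), ((5/48 : ℝ), (25/192 : ℝ), (5/64 : ℝ)), ((25/192 : ℝ), (5/32 : ℝ), (5/96 : ℝ))]),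
  ((3/8 : ℝ), (7/16 : ℝ), [((-1/8 : ℝ), (-13/128 : ℝ), (45/128 : ℝ)), ((-13/128 : ℝ), (-5/64 : ℝ), (21/64 : ℝ)), ((-5/64 : ℝ), (-7/128 : ℝ), (39/128 : ℝ)), ((-7/128 : ℝ), (-1/32 : ℝ), (9/32 : ℝ)), ((-1/32 : ℝ), (-1/128 : ℝ), (33/128 : ℝ)), ((-1/128 : ℝ), (1/64 : ℝ), (15/64 : ℝ)), ((1/64 : ℝ), (5/128 : ℝ), (27/128 : ℝ)), ((5/128 : ℝ), (1/16 : ℝ), (3/16 : ℝ)), ((1/16 : ℝ), (3/32 : ℝ), (5/32 : ℝ)), ((3/32 : ℝ), (1/8 : ℝ), (1/8 : ℝ)), ((1/8 : ℝ), (5/32 : ℝ), (3/32 : ℝ)), ((5/32 : ℝ), (3/16 : ℝ), (1/16 : ℝ))]),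
  ((7/16 : ℝ), (1/2 : ℝ), [((-7/48 : ℝ), (-91/768 : ℝ), (105/256 : ℝ)), ((-91/768 : ℝ), (-35/384 : ℝ), (49/128 : ℝ)), ((-35/384 : ℝ), (-49/768 : ℝ), (91/256 : ℝ)), ((-49/768 : ℝ), (-7/192 : ℝ), (21/64 : ℝ)), ((-7/192 : ℝ), (-7/768 : ℝ), (77/256 : ℝ)), ((-7/768 : ℝ), (7/384 : ℝ), (35/128 : ℝ)), ((7/384 : ℝ), (35/768 : ℝ), (63/256 : ℝ)), ((35/768 : ℝ), (7/96 : ℝ), (7/32 : ℝ)), ((7/96 : ℝ), (7/64 : ℝ), (35/192 : ℝ)), ((7/64 : ℝ), (7/48 : ℝ), (7/48 : ℝ)), ((7/48 : ℝ), (35/192 : ℝ), (7/64 : ℝ)), ((35/192 : ℝ), (7/32 : ℝ), (7/96 : ℝ))]),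
  ((1/2 : ℝ), (9/16 : ℝ), [((-1/6 : ℝ), (-13/96 : ℝ), (15/32 : ℝ)), ((-13/96 : ℝ), (-5/48 : ℝ), (7/16 : ℝ)), ((-5/48 : ℝ), (-7/96 : ℝ), (13/32 : ℝ)), ((-7/96 : ℝ), (-1/24 : ℝ), (3/8 : ℝ)), ((-1/24 : ℝ), (-1/96 : ℝ), (11/32 : ℝ)), ((-1/96 : ℝ), (1/48 : ℝ), (5/16 : ℝ)), ((1/48 : ℝ), (5/96 : ℝ), (9/32 : ℝ)), ((5/96 : ℝ), (1/12 : ℝ), (1/4 : ℝ)), ((1/12 : ℝ), (1/8 : ℝ), (5/24 : ℝ)), ((1/8 : ℝ), (1/6 : ℝ), (1/6 : ℝ)), ((1/6 : ℝ), (5/24 : ℝ), (1/8 : ℝ)), ((5/24 : ℝ), (1/4 : ℝ), (1/12 : ℝ)), ((1/4 : ℝ), (7/24 : ℝ), (1/24 : ℝ))]),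
  ((9/16 : ℝ), (5/8 : ℝ), [((-3/16 : ℝ), (-39/256 : ℝ), (135/256 : ℝ)), ((-39/256 : ℝ), (-15/128 : ℝ), (63/128 : ℝ)), ((-15/128 : ℝ), (-21/256 : ℝ), (117/256 : ℝ)), ((-21/256 : ℝ), (-3/64 : ℝ), (27/64 : ℝ)), ((-3/64 : ℝ), (-3/256 : ℝ), (99/256 : ℝ)), ((-3/256 : ℝ), (3/128 : ℝ), (45/128 : ℝ)), ((3/128 : ℝ), (15/256 : ℝ), (81/256 : ℝ)), ((15/256 : ℝ), (3/32 : ℝ), (9/32 : ℝ)), ((3/32 : ℝ), (9/64 : ℝ), (15/64 : ℝ)), ((9/64 : ℝ), (3/16 : ℝ), (3/16 : ℝ)), ((3/16 : ℝ), (15/64 : ℝ), (9/64 : ℝ)), ((15/64 : ℝ), (9/32 : ℝ), (3/32 : ℝ)), ((9/32 : ℝ), (21/64 : ℝ), (3/64 : ℝ))]),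
  ((5/8 : ℝ), (21/32 : ℝ), [((-5/24 : ℝ), (-65/384 : ℝ), (75/128 : ℝ)), ((-65/384 : ℝ), (-25/192 : ℝ), (35/64 : ℝ)), ((-25/192 : ℝ), (-35/384 : ℝ), (65/128 : ℝ)), ((-35/384 : ℝ), (-5/96 : ℝ), (15/32 : ℝ)), ((-5/96 : ℝ), (-5/384 : ℝ), (55/128 : ℝ)), ((-5/384 : ℝ), (5/192 : ℝ), (25/64 : ℝ)), ((5/192 : ℝ), (25/384 : ℝ), (45/128 : ℝ)), ((25/384 : ℝ), (5/48 : ℝ), (5/16 : ℝ)), ((5/48 : ℝ), (5/32 : ℝ), (25/96 : ℝ)), ((5/32 : ℝ), (5/24 : ℝ), (5/24 : ℝ)), ((5/24 : ℝ), (25/96 : ℝ), (5/32 : ℝ)), ((25/96 : ℝ), (5/16 : ℝ), (5/48 : ℝ)), ((5/16 : ℝ), (35/96 : ℝ), (5/96 : ℝ))]),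
  ((21/32 : ℝ), (11/16 : ℝ), [((-7/32 : ℝ), (-286199/1600000 : ℝ), (986199/1600000 : ℝ)), ((-286199/1600000 : ℝ), (-111199/800000 : ℝ), (461199/800000 : ℝ)), ((-111199/800000 : ℝ), (-158597/1600000 : ℝ), (858597/1600000 : ℝ)), ((-158597/1600000 : ℝ), (-23699/400000 : ℝ), (198699/400000 : ℝ)), ((-23699/400000 : ℝ), (-6199/320000 : ℝ), (146199/320000 : ℝ)), ((-6199/320000 : ℝ), (16403/800000 : ℝ), (333597/800000 : ℝ)), ((16403/800000 : ℝ), (58937/800000 : ℝ), (291063/800000 : ℝ)), ((58937/800000 : ℝ), (101471/800000 : ℝ), (248529/800000 : ℝ)), ((101471/800000 : ℝ), (28801/160000 : ℝ), (41199/160000 : ℝ)), ((28801/160000 : ℝ), (186539/800000 : ℝ), (163461/800000 : ℝ)), ((186539/800000 : ℝ), (229073/800000 : ℝ), (120927/800000 : ℝ)), ((229073/800000 : ℝ), (271607/800000 : ℝ), (78393/800000 : ℝ))]),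
  ((11/16 : ℝ), (23/32 : ℝ), [((-11/48 : ℝ), (-532481/4800000 : ℝ), (910827/1600000 : ℝ)), ((-532481/4800000 : ℝ), (-28609/400000 : ℝ), (635827/1200000 : ℝ)), ((-28609/400000 : ℝ), (-30827/960000 : ℝ), (470827/960000 : ℝ)), ((-30827/960000 : ℝ), (17519/2400000 : ℝ), (360827/800000 : ℝ)), ((17519/2400000 : ℝ), (74737/1600000 : ℝ), (1975789/4800000 : ℝ)), ((74737/1600000 : ℝ), (51673/600000 : ℝ), (223327/600000 : ℝ)), ((51673/600000 : ℝ), (602557/4800000 : ℝ), (532481/1600000 : ℝ)), ((602557/4800000 : ℝ), (26391/160000 : ℝ), (140827/480000 : ℝ)), ((26391/160000 : ℝ), (980903/4800000 : ℝ), (1219097/4800000 : ℝ)), ((980903/4800000 : ℝ), (292519/1200000 : ℝ), (85827/400000 : ℝ)), ((292519/1200000 : ℝ), (453083/1600000 : ℝ), (840751/4800000 : ℝ)), ((453083/1600000 : ℝ), (4834439/14400000 : ℝ), (1765561/14400000 : ℝ)), ((4834439/14400000 : ℝ), (5591131/14400000 : ℝ), (1008869/14400000 : ℝ))]),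
  ((23/32 : ℝ), (3/4 : ℝ), [((-23/96 : ℝ), (-676061/3600000 : ℝ), (51507/100000 : ℝ)), ((-676061/3600000 : ℝ), (-1399171/14400000 : ℝ), (57593/100000 : ℝ)), ((-1399171/14400000 : ℝ), (-419927/7200000 : ℝ), (3869927/7200000 : ℝ)), ((-419927/7200000 : ℝ), (-280537/14400000 : ℝ), (7180537/14400000 : ℝ)), ((-280537/14400000 : ℝ), (13939/720000 : ℝ), (331061/720000 : ℝ)), ((13939/720000 : ℝ), (838097/14400000 : ℝ), (6061903/14400000 : ℝ)), ((838097/14400000 : ℝ), (698707/7200000 : ℝ), (2751293/7200000 : ℝ)), ((698707/7200000 : ℝ), (1956731/14400000 : ℝ), (4943269/14400000 : ℝ)), ((1956731/14400000 : ℝ), (157253/900000 : ℝ), (273997/900000 : ℝ)), ((157253/900000 : ℝ), (615073/2880000 : ℝ), (764927/2880000 : ℝ)), ((615073/2880000 : ℝ), (424569/1600000 : ℝ), (1026293/4800000 : ℝ)), ((424569/1600000 : ℝ), (4566877/14400000 : ℝ), (2333123/14400000 : ℝ)), ((4566877/14400000 : ℝ), (5312633/14400000 : ℝ), (1587367/14400000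 : ℝ))]),
  ((3/4 : ℝ), (25/32 : ℝ), [((-1/4 : ℝ), (-338961/1600000 : ℝ), (281/625 : ℝ)), ((-338961/1600000 : ℝ), (-772727/4800000 : ℝ), (25249/50000 : ℝ)), ((-772727/4800000 : ℝ), (-18961/320000 : ℝ), (6981/12500 : ℝ)), ((-18961/320000 : ℝ), (-16883/800000 : ℝ), (416883/800000 : ℝ)), ((-16883/800000 : ℝ), (27273/1600000 : ℝ), (772727/1600000 : ℝ)), ((27273/1600000 : ℝ), (11039/200000 : ℝ), (88961/200000 : ℝ)), ((11039/200000 : ℝ), (149351/1600000 : ℝ), (650649/1600000 : ℝ)), ((149351/1600000 : ℝ), (21039/160000 : ℝ), (58961/160000 : ℝ)), ((21039/160000 : ℝ), (271429/1600000 : ℝ), (528571/1600000 : ℝ)), ((271429/1600000 : ℝ), (83117/400000 : ℝ), (116883/400000 : ℝ)), ((83117/400000 : ℝ), (393507/1600000 : ℝ), (406493/1600000 : ℝ)), ((393507/1600000 : ℝ), (1424677/4800000 : ℝ), (975323/4800000 : ℝ)), ((1424677/4800000 : ℝ), (1668833/4800000 : ℝ), (731167/4800000 : ℝ))]),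
  ((25/32 : ℝ), (13/16 : ℝ), [((-25/96 : ℝ), (-52997/225000 : ℝ), (36931/100000 : ℝ)), ((-52997/225000 : ℝ), (-71363/360000 : ℝ), (41641/100000 : ℝ)), ((-71363/360000 : ℝ), (-144827/900000 : ℝ), (5889/12500 : ℝ)), ((-144827/900000 : ℝ), (-222493/1800000 : ℝ), (51201/100000 : ℝ)), ((-222493/1800000 : ℝ), (-43397/1800000 : ℝ), (27111/50000 : ℝ)), ((-43397/1800000 : ℝ), (5941/450000 : ℝ), (114217/225000 : ℝ)), ((5941/450000 : ℝ), (3541/56250 : ℝ), (206047/450000 : ℝ)), ((3541/56250 : ℝ), (1127/10000 : ℝ), (3061/7500 : ℝ)), ((1127/10000 : ℝ), (36551/225000 : ℝ), (161273/450000 : ℝ)), ((36551/225000 : ℝ), (95489/450000 : ℝ), (69443/225000 : ℝ)), ((95489/450000 : ℝ), (9823/37500 : ℝ), (38833/150000 : ℝ)), ((9823/37500 : ℝ), (140263/450000 : ℝ), (5882/28125 : ℝ))]),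
  ((13/16 : ℝ), (27/32 : ℝ), [((-13/48 : ℝ), (-887893/3600000 : ℝ), (26083/100000 : ℝ)), ((-887893/3600000 : ℝ), (-302893/1440000 : ℝ), (6499/20000 : ℝ)), ((-302893/1440000 : ℝ), (-156643/900000 : ℝ), (19707/50000 : ℝ)), ((-156643/900000 : ℝ), (-25131/200000 : ℝ), (5551/12500 : ℝ)), ((-25131/200000 : ℝ), (-2173/28125 : ℝ), (49063/100000 : ℝ)), ((-2173/28125 : ℝ), (5857/300000 : ℝ), (25989/50000 : ℝ)), ((5857/300000 : ℝ), (122249/1800000 : ℝ), (852751/1800000 : ℝ)), ((122249/1800000 : ℝ), (52339/450000 : ℝ), (191411/450000 : ℝ)), ((52339/450000 : ℝ), (98821/600000 : ℝ), (75393/200000 : ℝ)), ((98821/600000 : ℝ), (38357/180000 : ℝ), (59143/180000 : ℝ)), ((38357/180000 : ℝ), (470677/1800000 : ℝ), (504323/1800000 : ℝ)), ((470677/1800000 : ℝ), (1028461/3600000 : ℝ), (10397/50000 : ℝ))]),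
  ((27/32 : ℝ), (7/8 : ℝ), [((-51757/192000 : ℝ), (-15757/64000 : ℝ), (3199/25000 : ℝ)), ((-15757/64000 : ℝ), (-8557/38400 : ℝ), (11459/50000 : ℝ)), ((-8557/38400 : ℝ), (-4507/24000 : ℝ), (29223/100000 : ℝ)), ((-4507/24000 : ℝ), (-29327/192000 : ℝ), (35857/100000 : ℝ)), ((-29327/192000 : ℝ), (-11299/96000 : ℝ), (1267/3125 : ℝ)), ((-11299/96000 : ℝ), (-2271/32000 : ℝ), (4391/10000 : ℝ)), ((-2271/32000 : ℝ), (443/6400 : ℝ), (1873/4000 : ℝ)), ((443/6400 : ℝ), (11131/96000 : ℝ), (881/2000 : ℝ)), ((11131/96000 : ℝ), (28991/192000 : ℝ), (2037/5000 : ℝ)), ((28991/192000 : ℝ), (893/4800 : ℝ), (3613/10000 : ℝ)), ((893/4800 : ℝ), (42449/192000 : ℝ), (1481/5000 : ℝ)), ((42449/192000 : ℝ), (3129/12800 : ℝ), (11737/50000 : ℝ)), ((3129/12800 : ℝ), (51421/192000 : ℝ), (6927/50000 : ℝ))]),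
  ((7/8 : ℝ), (29/32 : ℝ), [((-3074953/14400000 : ℝ), (-917837/4800000 : ℝ), (20473/100000 : ℝ)), ((-917837/4800000 : ℝ), (-2432069/14400000 : ℝ), (26271/100000 : ℝ)), ((-2432069/14400000 : ℝ), (-974953/7200000 : ℝ), (15259/50000 : ℝ)), ((-974953/7200000 : ℝ), (-1467743/14400000 : ℝ), (35171/100000 : ℝ)), ((-1467743/14400000 : ℝ), (-91651/1600000 : ℝ), (38411/100000 : ℝ)), ((-91651/1600000 : ℝ), (782351/14400000 : ℝ), (41093/100000 : ℝ)), ((782351/14400000 : ℝ), (285047/2880000 : ℝ), (19321/50000 : ℝ)), ((285047/2880000 : ℝ), (953699/7200000 : ℝ), (35507/100000 : ℝ)), ((953699/7200000 : ℝ), (2389561/14400000 : ℝ), (31/100 : ℝ)), ((2389561/14400000 : ℝ), (2711003/14400000 : ℝ), (26903/100000 : ℝ)), ((2711003/14400000 : ℝ), (202163/960000 : ℝ), (2137/10000 : ℝ)), ((202163/960000 : ℝ), (3353887/14400000 : ℝ), (12637/100000 : ℝ))]),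
  ((29/32 : ℝ), (15/16 : ℝ), [((-477673/2880000 : ℝ), (-27821/192000 : ℝ), (9819/50000 : ℝ)), ((-27821/192000 : ℝ), (-356957/2880000 : ℝ), (3013/12500 : ℝ)), ((-356957/2880000 : ℝ), (-13321/144000 : ℝ), (27387/100000 : ℝ)), ((-13321/144000 : ℝ), (-6071/120000 : ℝ), (3089/10000 : ℝ)), ((-6071/120000 : ℝ), (78043/1440000 : ℝ), (8377/25000 : ℝ)), ((78043/1440000 : ℝ), (246623/2880000 : ℝ), (31479/100000 : ℝ)), ((246623/2880000 : ℝ), (8429/72000 : ℝ), (707/2500 : ℝ)), ((8429/72000 : ℝ), (66253/480000 : ℝ), (12643/50000 : ℝ)), ((66253/480000 : ℝ), (114469/720000 : ℝ), (851/4000 : ℝ)), ((114469/720000 : ℝ), (259117/1440000 : ℝ), (15477/100000 : ℝ))]),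
  ((15/16 : ℝ), (31/32 : ℝ), [((-8291/80000 : ℝ), (-1693/20000 : ℝ), (17117/100000 : ℝ)), ((-1693/20000 : ℝ), (-5253/80000 : ℝ), (10003/50000 : ℝ)), ((-5253/80000 : ℝ), (-5949/160000 : ℝ), (11021/50000 : ℝ)), ((-5949/160000 : ℝ), (6203/160000 : ℝ), (23877/100000 : ℝ)), ((6203/160000 : ℝ), (9241/160000 : ℝ), (22697/100000 : ℝ)), ((9241/160000 : ℝ), (12279/160000 : ℝ), (20941/100000 : ℝ)), ((12279/160000 : ℝ), (15317/160000 : ℝ), (18447/100000 : ℝ)), ((15317/160000 : ℝ), (3671/32000 : ℝ), (7423/50000 : ℝ))])]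

lemma hOK_DATA : slabsOK 0 DATA := by
  norm_num [DATA, slabsOK, rowOK]

lemma hIn_DATA : slabsIn DATA := by
  norm_num [DATA, slabsIn, rowIn, boxIn]

lemma hQ_DATA : (0.1874 : ℝ) ≤ slabsSum DATA := by
  norm_num [DATA, slabsSum, rowSum]

end SAT


/-- The solid angle (measured as three times the volume of the part of the unit
ball cut out by the corresponding cone from the apex) subtended at the apex
`O = 0` by the base of a regular tight triangular pyramid — whose base is the
equilateral triangle with incircle of radius `1/√3` centered at `H = (0,0,1)`
in the plane at distance 1 from `O` (so circumradius `2/√3`) — is strictly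
greater than `4π/13`; equivalently, 13 times this solid angle exceeds `4π`. -/
theorem thirteen_times_solid_angle_triangular_gt_four_pi :
    let A : Fin 3 → EuclideanSpace ℝ (Fin 3) := fun k =>
      (WithLp.equiv 2 _).symm
        ![(2 / Real.sqrt 3) * Real.cos (2 * π * k / 3),
          (2 / Real.sqrt 3) * Real.sin (2 * π * k / 3), 1]
    let cone : Set (EuclideanSpace ℝ (Fin 3)) :=
      {y | ∃ t : ℝ, 0 ≤ t ∧ ∃ p ∈ convexHull ℝ (Set.range A), y = t • p}
    let ϖ := 3 * (MeasureTheory.volume (Metric.ball (0 : EuclideanSpace ℝ (Fin 3)) 1 ∩ cone)).toReal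
    4 * π / 13 < ϖ ∧ 4 * π < 13 * ϖ := by
  intro A cone ϖ
  exact SAT.final_bounds (SAT.lower_bound SAT.hOK_DATA SAT.hIn_DATA) SAT.hQ_DATA
end

section
/- For the function s(α₁, α₂, α₃) = tan α₁ + tan α₂ + tan α₃ + tan(π − α₁ − α₂ − α₃) on the domain where all four angles lie in (0, π/2), the unique critical point is α₁ = α₂ = α₃ = π/4, and it is the global minimum with value 4. -/
open Real Set

/-- Key two-point convexity fact for `tan` on `(0, π/2)`. -/
lemma tan_two_point (x y : ℝ) (hx : x ∈ Ioo 0 (π/2)) (hy : y ∈ Ioo 0 (π/2)) :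
    2 * Real.tan ((x + y) / 2) ≤ Real.tan x + Real.tan y ∧
    (Real.tan x + Real.tan y = 2 * Real.tan ((x + y) / 2) → x = y) := by
  obtain ⟨hx0, hx2⟩ := hx
  obtain ⟨hy0, hy2⟩ := hy
  have hπ := Real.pi_pos
  have hcx : 0 < Real.cos x := Real.cos_pos_of_mem_Ioo ⟨by linarith, hx2⟩
  have hcy : 0 < Real.cos y := Real.cos_pos_of_mem_Ioo ⟨by linarith, hy2⟩
  have hcm : 0 < Real.cos ((x + y) / 2) :=
    Real.cos_pos_of_mem_Ioo ⟨by linarith, by linarith⟩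
  have hsxy : 0 < Real.sin (x + y) :=
    Real.sin_pos_of_pos_of_lt_pi (by linarith) (by linarith)
  have h1 : Real.tan x + Real.tan y = Real.sin (x + y) / (Real.cos x * Real.cos y) := by
    rw [Real.tan_eq_sin_div_cos, Real.tan_eq_sin_div_cos, Real.sin_add]
    field_simp
  have h2 : 2 * Real.tan ((x + y) / 2)
      = Real.sin (x + y) / (Real.cos ((x + y) / 2)) ^ 2 := by
    rw [Real.tan_eq_sin_div_cos]
    have hs : Real.sin (x + y) = 2 * Real.sin ((x + y) / 2) * Real.cos ((x + y) / 2) := by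
      have h : x + y = 2 * ((x + y) / 2) := by ring
      rw [h, Real.sin_two_mul]; ring_nf
    rw [hs]; field_simp
  have hprod : Real.cos x * Real.cos y = (Real.cos (x - y) + Real.cos (x + y)) / 2 := by
    rw [Real.cos_sub, Real.cos_add]; ring
  have hm2 : (Real.cos ((x + y) / 2)) ^ 2 = (1 + Real.cos (x + y)) / 2 := by
    rw [Real.cos_sq]
    have h : 2 * ((x + y) / 2) = x + y := by ring
    rw [h]; ring
  have hle : Real.cos x * Real.cos y ≤ (Real.cos ((x + y) / 2)) ^ 2 := by
    rw [hprod, hm2]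
    have := Real.cos_le_one (x - y)
    linarith
  have key : Real.tan x + Real.tan y - 2 * Real.tan ((x + y) / 2)
      = Real.sin (x + y) * ((Real.cos ((x + y) / 2)) ^ 2 - Real.cos x * Real.cos y)
        / (Real.cos x * Real.cos y * (Real.cos ((x + y) / 2)) ^ 2) := by
    rw [h1, h2]; field_simp
  constructor
  · have hnum : 0 ≤ Real.sin (x + y) * ((Real.cos ((x + y) / 2)) ^ 2 - Real.cos x * Real.cos y) :=
      mul_nonneg hsxy.le (by linarith)
    have hden : 0 < Real.cos x * Real.cos y * (Real.cos ((x + y) / 2)) ^ 2 := by positivity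
    have := div_nonneg hnum hden.le
    linarith [key, this]
  · intro heq
    have h0 : Real.sin (x + y) * ((Real.cos ((x + y) / 2)) ^ 2 - Real.cos x * Real.cos y)
        / (Real.cos x * Real.cos y * (Real.cos ((x + y) / 2)) ^ 2) = 0 := by
      rw [← key]; linarith
    have hden : Real.cos x * Real.cos y * (Real.cos ((x + y) / 2)) ^ 2 ≠ 0 := by positivity
    have h0' := (div_eq_zero_iff.1 h0).resolve_right hden
    have hdiff : (Real.cos ((x + y) / 2)) ^ 2 - Real.cos x * Real.cos y = 0 :=
      (mul_eq_zero.1 h0').resolve_left (ne_of_gt hsxy)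
    have hcos1 : Real.cos (x - y) = 1 := by
      rw [hprod] at hdiff; rw [hm2] at hdiff; linarith
    have hxy : x - y = 0 := by
      rw [Real.cos_eq_one_iff_of_lt_of_lt (by linarith) (by linarith)] at hcos1
      exact hcos1
    linarith

/-- `cos` determines points of `(0, π/2)` even through `1/cos² `. -/
lemma cos_inj_aux (x y : ℝ) (hx : x ∈ Ioo 0 (π/2)) (hy : y ∈ Ioo 0 (π/2))
    (h : 1 / Real.cos x ^ 2 = 1 / Real.cos y ^ 2) : x = y := by
  have hπ := Real.pi_pos
  have hcx : 0 < Real.cos x := Real.cos_pos_of_mem_Ioo ⟨by linarith [hx.1], hx.2⟩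
  have hcy : 0 < Real.cos y := Real.cos_pos_of_mem_Ioo ⟨by linarith [hy.1], hy.2⟩
  have hx2 : Real.cos x ^ 2 ≠ 0 := by positivity
  have hy2 : Real.cos y ^ 2 ≠ 0 := by positivity
  rw [div_eq_div_iff hx2 hy2] at h
  have h1 : (Real.cos x - Real.cos y) * (Real.cos x + Real.cos y) = 0 := by
    linear_combination -h
  have hcxy : Real.cos x = Real.cos y := by
    rcases mul_eq_zero.1 h1 with h' | h'
    · linarith
    · nlinarith
  exact Real.injOn_cos ⟨hx.1.le, by linarith [hx.2]⟩ ⟨hy.1.le, by linarith [hy.2]⟩ hcxy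

/-- The total derivative of `s` at `p`. -/
noncomputable def Lmap (p : ℝ × ℝ × ℝ) : ℝ × ℝ × ℝ →L[ℝ] ℝ :=
  (1 / Real.cos p.1 ^ 2) • ContinuousLinearMap.fst ℝ ℝ (ℝ × ℝ) +
  (1 / Real.cos p.2.1 ^ 2) •
    ((ContinuousLinearMap.fst ℝ ℝ ℝ).comp (ContinuousLinearMap.snd ℝ ℝ (ℝ × ℝ))) +
  (1 / Real.cos p.2.2 ^ 2) •
    ((ContinuousLinearMap.snd ℝ ℝ ℝ).comp (ContinuousLinearMap.snd ℝ ℝ (ℝ × ℝ))) +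
  (1 / Real.cos (π - p.1 - p.2.1 - p.2.2) ^ 2) •
    (-(ContinuousLinearMap.fst ℝ ℝ (ℝ × ℝ)) -
      (ContinuousLinearMap.fst ℝ ℝ ℝ).comp (ContinuousLinearMap.snd ℝ ℝ (ℝ × ℝ)) -
      (ContinuousLinearMap.snd ℝ ℝ ℝ).comp (ContinuousLinearMap.snd ℝ ℝ (ℝ × ℝ)))

lemma Lmap_apply (p v : ℝ × ℝ × ℝ) :
    Lmap p v = (1 / Real.cos p.1 ^ 2) * v.1 + (1 / Real.cos p.2.1 ^ 2) * v.2.1 +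
      (1 / Real.cos p.2.2 ^ 2) * v.2.2 +
      (1 / Real.cos (π - p.1 - p.2.1 - p.2.2) ^ 2) * (-v.1 - v.2.1 - v.2.2) := by
  simp only [Lmap, ContinuousLinearMap.add_apply, ContinuousLinearMap.smul_apply,
    ContinuousLinearMap.sub_apply, ContinuousLinearMap.neg_apply,
    ContinuousLinearMap.comp_apply, ContinuousLinearMap.coe_fst',
    ContinuousLinearMap.coe_snd', smul_eq_mul]

lemma hasFDerivAt_s (p : ℝ × ℝ × ℝ) (hca : Real.cos p.1 ≠ 0) (hcb : Real.cos p.2.1 ≠ 0)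
    (hcc : Real.cos p.2.2 ≠ 0) (hcd : Real.cos (π - p.1 - p.2.1 - p.2.2) ≠ 0) :
    HasFDerivAt (fun q : ℝ × ℝ × ℝ => Real.tan q.1 + Real.tan q.2.1 + Real.tan q.2.2 +
      Real.tan (π - q.1 - q.2.1 - q.2.2)) (Lmap p) p := by
  have h1 : HasFDerivAt (fun q : ℝ × ℝ × ℝ => Real.tan q.1)
      ((1 / Real.cos p.1 ^ 2) • ContinuousLinearMap.fst ℝ ℝ (ℝ × ℝ)) p :=
    (Real.hasDerivAt_tan hca).comp_hasFDerivAt p hasFDerivAt_fst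
  have h2 : HasFDerivAt (fun q : ℝ × ℝ × ℝ => Real.tan q.2.1)
      ((1 / Real.cos p.2.1 ^ 2) •
        ((ContinuousLinearMap.fst ℝ ℝ ℝ).comp (ContinuousLinearMap.snd ℝ ℝ (ℝ × ℝ)))) p :=
    by
      have hg := (hasFDerivAt_fst (𝕜 := ℝ) (p := p.2)).comp p (hasFDerivAt_snd (𝕜 := ℝ) (p := p))
      have hg' : HasFDerivAt (fun q : ℝ × ℝ × ℝ => q.2.1)
          ((ContinuousLinearMap.fst ℝ ℝ ℝ).comp (ContinuousLinearMap.snd ℝ ℝ (ℝ × ℝ))) p := hg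
      exact (Real.hasDerivAt_tan hcb).comp_hasFDerivAt p hg'
  have h3 : HasFDerivAt (fun q : ℝ × ℝ × ℝ => Real.tan q.2.2)
      ((1 / Real.cos p.2.2 ^ 2) •
        ((ContinuousLinearMap.snd ℝ ℝ ℝ).comp (ContinuousLinearMap.snd ℝ ℝ (ℝ × ℝ)))) p :=
    by
      have hg := (hasFDerivAt_snd (𝕜 := ℝ) (p := p.2)).comp p (hasFDerivAt_snd (𝕜 := ℝ) (p := p))
      have hg' : HasFDerivAt (fun q : ℝ × ℝ × ℝ => q.2.2)
          ((ContinuousLinearMap.snd ℝ ℝ ℝ).comp (ContinuousLinearMap.snd ℝ ℝ (ℝ × ℝ))) p := hg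
      exact (Real.hasDerivAt_tan hcc).comp_hasFDerivAt p hg'
  have hin : HasFDerivAt (fun q : ℝ × ℝ × ℝ => π - q.1 - q.2.1 - q.2.2)
      (-(ContinuousLinearMap.fst ℝ ℝ (ℝ × ℝ)) -
        (ContinuousLinearMap.fst ℝ ℝ ℝ).comp (ContinuousLinearMap.snd ℝ ℝ (ℝ × ℝ)) -
        (ContinuousLinearMap.snd ℝ ℝ ℝ).comp (ContinuousLinearMap.snd ℝ ℝ (ℝ × ℝ))) p :=
    (((hasFDerivAt_fst (𝕜 := ℝ) (p := p)).const_sub π).sub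
        (hasFDerivAt_fst.comp p hasFDerivAt_snd)).sub
        (hasFDerivAt_snd.comp p hasFDerivAt_snd)
  have h4 := (Real.hasDerivAt_tan hcd).comp_hasFDerivAt p hin
  exact ((h1.add h2).add h3).add h4

/-- For `s(α₁,α₂,α₃) = tan α₁ + tan α₂ + tan α₃ + tan (π − α₁ − α₂ − α₃)` on the
domain where all four angles lie in `(0, π/2)`, the unique critical point is
`α₁ = α₂ = α₃ = π/4`, and it is the global minimum, with value 4. -/
theorem tan_sum_critical_point_and_min :
    let s : ℝ × ℝ × ℝ → ℝ := fun p =>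
      Real.tan p.1 + Real.tan p.2.1 + Real.tan p.2.2 +
        Real.tan (π - p.1 - p.2.1 - p.2.2)
    let D : Set (ℝ × ℝ × ℝ) := {p | p.1 ∈ Ioo 0 (π / 2) ∧ p.2.1 ∈ Ioo 0 (π / 2) ∧
      p.2.2 ∈ Ioo 0 (π / 2) ∧ (π - p.1 - p.2.1 - p.2.2) ∈ Ioo 0 (π / 2)}
    ∀ p ∈ D,
      (fderiv ℝ s p = 0 ↔ p = (π / 4, π / 4, π / 4)) ∧
      4 ≤ s p ∧
      (s p = 4 ↔ p = (π / 4, π / 4, π / 4)) := by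
  intro s D p hp
  obtain ⟨ha, hb, hc, hd⟩ := hp
  have hπ := Real.pi_pos
  have hca : 0 < Real.cos p.1 := Real.cos_pos_of_mem_Ioo ⟨by linarith [ha.1], ha.2⟩
  have hcb : 0 < Real.cos p.2.1 := Real.cos_pos_of_mem_Ioo ⟨by linarith [hb.1], hb.2⟩
  have hcc : 0 < Real.cos p.2.2 := Real.cos_pos_of_mem_Ioo ⟨by linarith [hc.1], hc.2⟩
  have hcd : 0 < Real.cos (π - p.1 - p.2.1 - p.2.2) :=
    Real.cos_pos_of_mem_Ioo ⟨by linarith [hd.1], hd.2⟩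
  have hfd : fderiv ℝ s p = Lmap p :=
    (hasFDerivAt_s p hca.ne' hcb.ne' hcc.ne' hcd.ne').fderiv
  -- minimum via two-point convexity
  have key1 := tan_two_point p.1 p.2.1 ha hb
  have key2 := tan_two_point p.2.2 (π - p.1 - p.2.1 - p.2.2) hc hd
  have hu : (p.1 + p.2.1) / 2 ∈ Ioo 0 (π/2) :=
    ⟨by linarith [ha.1, hb.1], by linarith [ha.2, hb.2]⟩
  have hv : (p.2.2 + (π - p.1 - p.2.1 - p.2.2)) / 2 ∈ Ioo 0 (π/2) :=
    ⟨by linarith [hc.1, hd.1], by linarith [hc.2, hd.2]⟩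
  have key3 := tan_two_point _ _ hu hv
  have hmid : ((p.1 + p.2.1) / 2 + (p.2.2 + (π - p.1 - p.2.1 - p.2.2)) / 2) / 2 = π / 4 := by
    ring
  have htan4 : Real.tan (π / 4) = 1 := Real.tan_pi_div_four
  have h3 := key3.1
  rw [hmid, htan4] at h3
  have hval : s p = Real.tan p.1 + Real.tan p.2.1 + Real.tan p.2.2 +
      Real.tan (π - p.1 - p.2.1 - p.2.2) := rfl
  have hmin : 4 ≤ s p := by rw [hval]; linarith [key1.1, key2.1]
  have hback : p = (π / 4, π / 4, π / 4) → s p = 4 := by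
    intro h
    rw [hval, h]
    simp only
    norm_num
    rw [show π - π/4 - π/4 - π/4 = π/4 by ring, htan4]
    norm_num
  refine ⟨⟨?_, ?_⟩, hmin, ?_, hback⟩
  · intro h0
    rw [hfd] at h0
    have hv1 : Lmap p (1, 0, 0) = 0 := by rw [h0]; rfl
    have hv2 : Lmap p (0, 1, 0) = 0 := by rw [h0]; rfl
    have hv3 : Lmap p (0, 0, 1) = 0 := by rw [h0]; rfl
    rw [Lmap_apply] at hv1 hv2 hv3
    norm_num at hv1 hv2 hv3
    have had : p.1 = π - p.1 - p.2.1 - p.2.2 := cos_inj_aux _ _ ha hd (by simp only [one_div]; linarith)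
    have hbd : p.2.1 = π - p.1 - p.2.1 - p.2.2 := cos_inj_aux _ _ hb hd (by simp only [one_div]; linarith)
    have hcd2 : p.2.2 = π - p.1 - p.2.1 - p.2.2 := cos_inj_aux _ _ hc hd (by simp only [one_div]; linarith)
    have h1 : p.1 = π / 4 := by linarith
    have h2 : p.2.1 = π / 4 := by linarith
    have h3' : p.2.2 = π / 4 := by linarith
    have : p = (p.1, p.2.1, p.2.2) := rfl
    rw [this, h1, h2, h3']
  · intro h
    rw [hfd]
    have h1 : p.1 = π / 4 := by rw [h]
    have h2 : p.2.1 = π / 4 := by rw [h]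
    have h3' : p.2.2 = π / 4 := by rw [h]
    refine ContinuousLinearMap.ext fun v => ?_
    rw [Lmap_apply, h1, h2, h3']
    rw [show π - π/4 - π/4 - π/4 = π/4 by ring]
    simp only [ContinuousLinearMap.zero_apply]
    ring
  · intro h4
    rw [hval] at h4
    have e1 : Real.tan p.1 + Real.tan p.2.1 = 2 * Real.tan ((p.1 + p.2.1) / 2) := by
      linarith [key1.1, key2.1]
    have e2 : Real.tan p.2.2 + Real.tan (π - p.1 - p.2.1 - p.2.2)
        = 2 * Real.tan ((p.2.2 + (π - p.1 - p.2.1 - p.2.2)) / 2) := by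
      linarith [key1.1, key2.1]
    have e3 : Real.tan ((p.1 + p.2.1) / 2) + Real.tan ((p.2.2 + (π - p.1 - p.2.1 - p.2.2)) / 2)
        = 2 * Real.tan (((p.1 + p.2.1) / 2 + (p.2.2 + (π - p.1 - p.2.1 - p.2.2)) / 2) / 2) := by
      rw [hmid, htan4]; linarith [key1.1, key2.1]
    have hab := key1.2 e1
    have hcd' := key2.2 e2
    have huv := key3.2 e3
    have h1 : p.1 = π / 4 := by linarith
    have h2 : p.2.1 = π / 4 := by linarith
    have h3' : p.2.2 = π / 4 := by linarith
    have : p = (p.1, p.2.1, p.2.2) := rfl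
    rw [this, h1, h2, h3']
end
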